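/- arXiv:2305.13588 — 5 statements merged into one kernel-verified Lean document; each statement's English description precedes it below -/
import Mathlib

section
/- Let k(x,y) = k̃(x,y)·a where k̃ is a complex-valued positive definite kernel on X and a ∈ A is an invertible positive element of a C*-algebra A. If the feature vectors {φ̃(x) : x ∈ X} of k̃ in its RKHS are linearly independent over ℂ, then the feature vectors {φ(x) : x ∈ X} of k in the associated RKHM over A are A-linearly independent. -/
/-- The `CStarModule` class as it stood in Mathlib of December 2024: a right `A`-module
(action of `Aᵐᵒᵖ`) with `⟪x, y <• a⟫ = ⟪x, y⟫ * a`. -/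
class OldCStarModule (A E : Type*) [NonUnitalSemiring A] [StarRing A]
    [Module ℂ A] [AddCommGroup E] [Module ℂ E] [PartialOrder A] [SMul Aᵐᵒᵖ E] [Norm A] [Norm E]
    extends Inner A E where
  inner_add_right {x} {y} {z} : inner x (y + z) = inner x y + inner x z
  inner_self_nonneg {x} : 0 ≤ inner x x
  inner_self {x} : inner x x = 0 ↔ x = 0
  inner_op_smul_right {a : A} {x y : E} : inner x (MulOpposite.op a • y) = inner x y * a
  inner_smul_right_complex {z : ℂ} {x} {y} : inner x (z • y) = z • inner x y
  star_inner x y : star (inner x y) = inner y x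
  norm_eq_sqrt_norm_inner_self x : ‖x‖ = √‖inner x x‖

theorem oldCSM_inner_zero_right {A : Type*} [CStarAlgebra A] [PartialOrder A]
    {E : Type*} [AddCommGroup E] [Module ℂ E] [Module Aᵐᵒᵖ E] [Norm E] [OldCStarModule A E]
    (x : E) : inner A x (0 : E) = 0 := by
  have h := OldCStarModule.inner_add_right (A := A) (x := x) (y := (0 : E)) (z := 0)
  rw [add_zero] at h
  simpa using h

theorem oldCSM_inner_sum_right {A : Type*} [CStarAlgebra A] [PartialOrder A]
    {E : Type*} [AddCommGroup E] [Module ℂ E] [Module Aᵐᵒᵖ E] [Norm E] [OldCStarModule A E]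
    {ι : Type*} (s : Finset ι) (x : E) (f : ι → E) :
    inner A x (∑ i ∈ s, f i) = ∑ i ∈ s, inner A x (f i) :=
  map_sum (AddMonoidHom.mk' (fun y : E => inner A x y)
    (fun y z => OldCStarModule.inner_add_right)) f s

/-- Let `k (x, y) = k̃ (x, y) • a` be a separable `A`-valued positive definite
kernel, where `k̃` is a complex-valued positive definite kernel (realized via a feature map `φ̃`
into a complex Hilbert space `H`, `k̃ x y = ⟪φ̃ x, φ̃ y⟫`) and `a ∈ A` is an invertible positive
element of the C*-algebra `A`.  If the feature vectors `{φ̃ x : x ∈ X}` are linearly independent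
over `ℂ`, then the feature vectors `{φ x : x ∈ X}` of `k` in the associated reproducing kernel
Hilbert `A`-module `E` (so that `⟪φ x, φ y⟫_A = k̃ x y • a`) are `A`-linearly independent. -/
theorem stmt1 {A : Type*} [CStarAlgebra A] [PartialOrder A] [StarOrderedRing A]
    {E : Type*} [AddCommGroup E] [Module ℂ E] [Module Aᵐᵒᵖ E] [Norm E] [OldCStarModule A E]
    {X : Type*} {H : Type*} [NormedAddCommGroup H] [InnerProductSpace ℂ H]
    (ktilde : X → X → ℂ) (phitilde : X → H)
    (hktilde : ∀ x y, ktilde x y = inner ℂ (phitilde x) (phitilde y))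
    (hli : LinearIndependent ℂ phitilde)
    (a : A) (ha : 0 ≤ a) (hainv : IsUnit a)
    (φ : X → E) (hk : ∀ x y, (inner A (φ x) (φ y) : A) = ktilde x y • a) :
    ∀ (n : ℕ) (x : Fin n → X), Function.Injective x → ∀ (c : Fin n → A),
      (∑ i, MulOpposite.op (c i) • φ (x i)) = 0 → ∀ i, c i = 0 := by
  intro n x hinj c hsum i
  set M : Matrix (Fin n) (Fin n) ℂ := Matrix.of fun i j => ktilde (x i) (x j) with hMdef
  -- M is invertible
  have hli' : LinearIndependent ℂ (phitilde ∘ x) := hli.comp x hinj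
  have hMunit : IsUnit M := by
    rw [← Matrix.mulVec_injective_iff_isUnit]
    have : Function.Injective M.mulVecLin := by
      rw [← LinearMap.ker_eq_bot, LinearMap.ker_eq_bot']
      intro w hw
      have hw' : ∀ j, ∑ l, ktilde (x j) (x l) * w l = 0 := by
        intro j
        have := congrFun hw j
        simpa [Matrix.mulVecLin_apply, Matrix.mulVec, dotProduct, hMdef] using this
      set u : H := ∑ l, w l • phitilde (x l) with hu
      have hju : ∀ j, (inner ℂ (phitilde (x j)) u : ℂ) = 0 := by
        intro j
        rw [hu, inner_sum]
        simpa [inner_smul_right, ← hktilde, mul_comm] using hw' j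
      have huu : (inner ℂ u u : ℂ) = 0 := by
        rw [hu, sum_inner]
        simp [inner_smul_left, ← hu, hju]
      have hu0 : u = 0 := inner_self_eq_zero.mp huu
      have := Fintype.linearIndependent_iff.mp hli' w (by simpa [hu] using hu0)
      funext l; exact this l
    exact this
  -- key equations
  have key : ∀ j, ∑ l, M j l • (a * c l) = 0 := by
    intro j
    have h0 : (inner A (φ (x j)) (∑ l, MulOpposite.op (c l) • φ (x l)) : A) = 0 := by
      rw [hsum]; exact oldCSM_inner_zero_right _
    rw [oldCSM_inner_sum_right] at h0
    calc ∑ l, M j l • (a * c l)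
        = ∑ l, (inner A (φ (x j)) (MulOpposite.op (c l) • φ (x l)) : A) := by
          refine Finset.sum_congr rfl fun l _ => ?_
          rw [OldCStarModule.inner_op_smul_right, hk, smul_mul_assoc]
          rfl
      _ = 0 := h0
  -- invert M
  have hdet : IsUnit M.det := (Matrix.isUnit_iff_isUnit_det M).mp hMunit
  have hinvM : M⁻¹ * M = 1 := Matrix.nonsing_inv_mul M hdet
  have hac : a * c i = 0 := by
    calc a * c i = ∑ l, ((1 : Matrix (Fin n) (Fin n) ℂ) i l) • (a * c l) := by
          simp [Matrix.one_apply]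
      _ = ∑ l, ((M⁻¹ * M) i l) • (a * c l) := by rw [hinvM]
      _ = ∑ l, (∑ j, M⁻¹ i j * M j l) • (a * c l) := by simp [Matrix.mul_apply]
      _ = ∑ j, M⁻¹ i j • ∑ l, M j l • (a * c l) := by
          simp_rw [Finset.smul_sum, Finset.sum_smul, mul_smul]
          exact Finset.sum_comm
      _ = 0 := by simp [key]
  -- cancel a
  have : (↑hainv.unit⁻¹ : A) * (a * c i) = c i := by
    rw [← mul_assoc, IsUnit.val_inv_mul, one_mul]
  rw [hac, mul_zero] at this
  exact this.symm
end

section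
/- Let F₁ = {f ∈ M : ‖f‖_M ≤ B₁} be the ball of radius B₁ in an RKHM M over A = ℂ^{d×d} associated with kernel k₁, and let p ∈ ℝ^d with ‖p‖ = 1. Then the empirical Rademacher complexity of the vector-valued class F₁p = {x ↦ f(x)p : f ∈ F₁} over samples x_1,...,x_n satisfies R̂_n(x, F₁p) ≤ (B₁/n) (Σ_{i=1}^n tr k₁(x_i,x_i))^{1/2}. -/
open Matrix ComplexOrder
open scoped Matrix.Norms.L2Operator

section Helpers

/-- Orthogonality of Rademacher sign patterns. -/
lemma stmt7_rad_orth {n d : ℕ} (i j : Fin n) (m m' : Fin d) :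
    ∑ σ : Fin n → Fin d → Bool,
      ((if σ i m then (1:ℝ) else -1) * (if σ j m' then (1:ℝ) else -1)) =
    if i = j ∧ m = m' then (2:ℝ) ^ (n * d) else 0 := by
  by_cases h : i = j ∧ m = m'
  · obtain ⟨rfl, rfl⟩ := h
    rw [if_pos ⟨rfl, rfl⟩]
    have : ∀ σ : Fin n → Fin d → Bool,
        ((if σ i m then (1:ℝ) else -1) * (if σ i m then (1:ℝ) else -1)) = 1 := by
      intro σ; by_cases hb : σ i m <;> simp [hb]
    rw [Finset.sum_congr rfl fun σ _ => this σ, Finset.sum_const, Finset.card_univ,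
      nsmul_eq_mul, mul_one]
    rw [show Fintype.card (Fin n → Fin d → Bool) = 2 ^ (n * d) by
      rw [Fintype.card_fun, Fintype.card_fun, Fintype.card_bool, Fintype.card_fin,
        Fintype.card_fin, ← pow_mul, Nat.mul_comm]]
    push_cast
    ring
  · rw [if_neg h]
    classical
    set F : (Fin n → Fin d → Bool) → (Fin n → Fin d → Bool) :=
      fun σ a b => if a = j ∧ b = m' then !σ a b else σ a b with hF
    have hFF : ∀ σ, F (F σ) = σ := by
      intro σ; funext a b
      by_cases hab : a = j ∧ b = m' <;> simp [hF, hab]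
    set E : (Fin n → Fin d → Bool) ≃ (Fin n → Fin d → Bool) := ⟨F, F, hFF, hFF⟩ with hE
    set g : (Fin n → Fin d → Bool) → ℝ :=
      fun σ => ((if σ i m then (1:ℝ) else -1) * (if σ j m' then (1:ℝ) else -1)) with hg
    have hneg : ∀ σ, g (E σ) = - g σ := by
      intro σ
      have h1 : (E σ) j m' = !σ j m' := by simp [hE, hF]
      have h2 : (E σ) i m = σ i m := by simp only [hE, hF, Equiv.coe_fn_mk]; rw [if_neg h]
      simp only [hg, h1, h2]
      by_cases hb : σ j m' <;> by_cases hc : σ i m <;> simp [hb, hc]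
    have hsum : ∑ σ, g σ = ∑ σ, g (E σ) := (Equiv.sum_comp E g).symm
    have key : ∑ σ, g σ = - ∑ σ, g σ :=
      hsum.trans ((Finset.sum_congr rfl fun σ _ => hneg σ).trans (Finset.sum_neg_distrib _))
    linarith [key]

/-- The central dot-product computation: for `C = vecMulVec ε p`,
`pᵀ (Cᴴ A) p = εᵀ A p` when `p` is a real unit vector. -/
lemma stmt7_keyA {d : ℕ} (p : Fin d → ℝ) (hp : ∑ l, p l ^ 2 = 1) (E : Fin d → ℝ)
    (A : Matrix (Fin d) (Fin d) ℂ) :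
    (fun l => (p l : ℂ)) ⬝ᵥ
      ((vecMulVec (fun m => (E m : ℂ)) (fun l => (p l : ℂ)))ᴴ * A).mulVec (fun l => (p l : ℂ))
    = (fun m => (E m : ℂ)) ⬝ᵥ A.mulVec (fun l => (p l : ℂ)) := by
  set p' : Fin d → ℂ := fun l => (p l : ℂ) with hp'
  have hp1 : (∑ l, p' l * p' l) = 1 := by
    have : (∑ l, p' l * p' l) = ((∑ l, p l ^ 2 : ℝ) : ℂ) := by
      push_cast; exact Finset.sum_congr rfl fun l _ => by simp [hp']; ring
    rw [this, hp]; norm_num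
  calc (p' ⬝ᵥ ((vecMulVec (fun m => (E m : ℂ)) p')ᴴ * A).mulVec p')
      = ∑ l, (p' l * p' l) * ((fun m => (E m : ℂ)) ⬝ᵥ A.mulVec p') := by
        refine Finset.sum_congr rfl fun l _ => ?_
        simp only [Matrix.mulVec, dotProduct, Matrix.mul_apply,
          Matrix.conjTranspose_apply, Matrix.vecMulVec_apply, star_mul',
          Complex.star_def, Complex.conj_ofReal, hp', Finset.sum_mul, Finset.mul_sum]
        rw [Finset.sum_comm]
        exact Finset.sum_congr rfl fun m _ => Finset.sum_congr rfl fun l' _ => by ring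
    _ = _ := by rw [← Finset.sum_mul, hp1, one_mul]

/-- `(vecMulVec ε p) p = ε` for a real unit vector `p`. -/
lemma stmt7_keyB {d : ℕ} (p : Fin d → ℝ) (hp : ∑ l, p l ^ 2 = 1) (E : Fin d → ℝ) :
    (vecMulVec (fun m => (E m : ℂ)) (fun l => (p l : ℂ))).mulVec (fun l => (p l : ℂ))
    = fun m => (E m : ℂ) := by
  have hp1 : (∑ l, ((p l : ℂ)) * (p l : ℂ)) = 1 := by
    have : (∑ l, ((p l :ℂ)) * (p l :ℂ)) = ((∑ l, p l ^ 2 : ℝ) : ℂ) := by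
      push_cast; exact Finset.sum_congr rfl fun l _ => by ring
    rw [this, hp]; norm_num
  funext m
  simp only [Matrix.mulVec, dotProduct, Matrix.vecMulVec_apply]
  rw [show ∀ s : Finset (Fin d), ∑ l ∈ s, (E m : ℂ) * (p l : ℂ) * (p l : ℂ)
      = (E m : ℂ) * ∑ l ∈ s, ((p l : ℂ) * (p l : ℂ)) from fun s => by
    rw [Finset.mul_sum]; exact Finset.sum_congr rfl fun l _ => by ring]
  rw [hp1, mul_one]

/-- `Re (pᵀ G p) ≤ ‖G‖` for a real unit vector `p` (L2 operator norm). -/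
lemma stmt7_opnorm {d : ℕ} (p : Fin d → ℝ) (hp : ∑ l, p l ^ 2 = 1)
    (G : Matrix (Fin d) (Fin d) ℂ) :
    ((fun l => (p l : ℂ)) ⬝ᵥ G.mulVec (fun l => (p l : ℂ))).re ≤ ‖G‖ := by
  set p' : Fin d → ℂ := fun l => (p l : ℂ) with hp'
  set P : EuclideanSpace ℂ (Fin d) := (WithLp.equiv 2 _).symm p' with hP
  have hstar : star p' = p' := by
    funext l; simp [hp', Complex.star_def, Complex.conj_ofReal]
  have hnP : ‖P‖ = 1 := by
    rw [EuclideanSpace.norm_eq]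
    simp only [hP, WithLp.equiv_symm_apply, PiLp.toLp_apply, hp', Complex.norm_real, sq_abs]
    rw [Real.sqrt_eq_one]
    simpa [sq_abs] using hp
  have h1 : p' ⬝ᵥ G.mulVec p' = @inner ℂ _ _ P ((WithLp.equiv 2 _).symm (G.mulVec p')) := by
    change _ = inner ℂ (WithLp.toLp 2 p') (WithLp.toLp 2 (G *ᵥ p'))
    rw [EuclideanSpace.inner_toLp_toLp, hstar, dotProduct_comm]
  have h2 : ‖@inner ℂ _ _ P ((WithLp.equiv 2 _).symm (G.mulVec p'))‖ ≤
      ‖P‖ * ‖((WithLp.equiv 2 _).symm (G.mulVec p') : EuclideanSpace ℂ (Fin d))‖ :=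
    norm_inner_le_norm _ _
  have h3 : ‖((WithLp.equiv 2 _).symm (G.mulVec p') : EuclideanSpace ℂ (Fin d))‖ ≤ ‖G‖ * ‖P‖ :=
    by have := G.l2_opNorm_mulVec P; exact this
  calc (p' ⬝ᵥ G.mulVec p').re ≤ ‖p' ⬝ᵥ G.mulVec p'‖ := Complex.re_le_norm _
    _ ≤ ‖G‖ := by
        rw [h1]; rw [hnP, one_mul] at h2; rw [hnP, mul_one] at h3; exact h2.trans h3

end Helpers

/-- Let `F₁ = {f ∈ M : ‖f‖_M ≤ B₁}` be the ball of radius `B₁` in the RKHM `M`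
over `A = ℂ^{d×d}` associated with the kernel `k₁` (feature map `φ`, reproducing property
`f(x) = ⟪φ x, f⟫_M`), and let `p ∈ ℝ^d` be a unit vector.  Then the empirical Rademacher
complexity (the expectation over uniform sign patterns `σ : Fin n → Fin d → Bool` of the
supremum over `f ∈ F₁` of `(1/n) ∑ᵢ ⟨σᵢ, f(xᵢ)p⟩`) of the vector-valued class
`F₁ p = {x ↦ f(x) p}` over samples `x₁,…,xₙ` satisfies
`R̂_n(x, F₁p) ≤ (B₁/n) (∑ᵢ tr k₁(xᵢ,xᵢ))^{1/2}`. -/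
theorem stmt7 {d n : ℕ} {X : Type*} {M : Type*} [AddCommGroup M] [Module ℂ M]
    [Module (Matrix (Fin d) (Fin d) ℂ)ᵐᵒᵖ M]
    (mI : M → M → Matrix (Fin d) (Fin d) ℂ)
    (h_add : ∀ x y z, mI x (y + z) = mI x y + mI x z)
    (h_smul : ∀ (z : ℂ) (x y : M), mI x (z • y) = z • mI x y)
    (h_opsmul : ∀ (a : Matrix (Fin d) (Fin d) ℂ) (x y : M),
      mI x (MulOpposite.op a • y) = mI x y * a)
    (h_star : ∀ x y, star (mI x y) = mI y x)
    (h_pos : ∀ x, (mI x x).PosSemidef)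
    (k₁ : X → X → Matrix (Fin d) (Fin d) ℂ) (φ : X → M)
    (hk : ∀ x y, mI (φ x) (φ y) = k₁ x y)
    (B₁ : ℝ) (hB₁ : 0 ≤ B₁)
    (p : Fin d → ℝ) (hp : ∑ l, p l ^ 2 = 1)
    (x : Fin n → X) :
    ((2 : ℝ) ^ (n * d))⁻¹ *
      (∑ σ : Fin n → Fin d → Bool,
        ⨆ f : {f : M // Real.sqrt ‖mI f f‖ ≤ B₁},
          (1 / (n : ℝ)) * ∑ i, ∑ l, (if σ i l then (1 : ℝ) else -1) *
            (((mI (φ (x i)) (f : M)).mulVec (fun l' => (p l' : ℂ))) l).re) ≤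
    (B₁ / n) * Real.sqrt (∑ i, (Matrix.trace (k₁ (x i) (x i))).re) := by
  classical
  set p' : Fin d → ℂ := fun l => (p l : ℂ) with hp'def
  -- basic consequences of the axioms
  have m_zero_right : ∀ y, mI y 0 = 0 := by
    intro y
    have h := h_add y 0 0
    rw [add_zero] at h
    exact (add_eq_right.mp h.symm)
  have m_zero_left : ∀ y, mI 0 y = 0 := by
    intro y; rw [← h_star, m_zero_right, star_zero]
  have hadd1 : ∀ y z w, mI (y + z) w = mI y w + mI z w := by
    intro y z w
    rw [← h_star, h_add, star_add, h_star, h_star]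
  have hsmul1 : ∀ (t : ℝ) (y w : M), mI ((t : ℂ) • y) w = (t : ℂ) • mI y w := by
    intro t y w
    rw [← h_star, h_smul, star_smul, h_star]
    congr 1
    simp [Complex.star_def, Complex.conj_ofReal]
  have hopsmul1 : ∀ (a : Matrix (Fin d) (Fin d) ℂ) (y w : M),
      mI (MulOpposite.op a • y) w = aᴴ * mI y w := by
    intro a y w
    rw [← h_star, h_opsmul, Matrix.star_mul, h_star, Matrix.star_eq_conjTranspose]
  have hsum1 : ∀ (s : Finset (Fin n)) (v : Fin n → M) (w : M),
      mI (∑ i ∈ s, v i) w = ∑ i ∈ s, mI (v i) w := by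
    intro s v w
    induction s using Finset.induction_on with
    | empty => simpa using m_zero_left w
    | insert _ _ hns ih =>
        rw [Finset.sum_insert hns, Finset.sum_insert hns, hadd1, ih]
  have hsum2 : ∀ (s : Finset (Fin n)) (v : Fin n → M) (w : M),
      mI w (∑ i ∈ s, v i) = ∑ i ∈ s, mI w (v i) := by
    intro s v w
    induction s using Finset.induction_on with
    | empty => simpa using m_zero_right w
    | insert _ _ hns ih =>
        rw [Finset.sum_insert hns, Finset.sum_insert hns, h_add, ih]
  -- the nonempty instance for the supremum
  haveI : Nonempty {f : M // Real.sqrt ‖mI f f‖ ≤ B₁} := by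
    refine ⟨0, ?_⟩
    rw [m_zero_right 0]
    simpa using hB₁
  -- the scalar positive semidefinite form
  set q : M → M → ℝ := fun a b => (p' ⬝ᵥ (mI a b).mulVec p').re with hq
  have hstarp : star p' = p' := by
    funext l; simp [hp'def, Complex.star_def, Complex.conj_ofReal]
  have hq_nonneg : ∀ a, 0 ≤ q a a := by
    intro a
    have h := (h_pos a).dotProduct_mulVec_nonneg p'
    rw [hstarp] at h
    rw [Complex.le_def] at h
    exact h.1
  have hqsymm : ∀ a b, q a b = q b a := by
    intro a b
    have h1 : p' ⬝ᵥ (mI b a).mulVec p' = star (p' ⬝ᵥ (mI a b).mulVec p') := by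
      rw [← h_star a b]
      simp only [dotProduct, Matrix.mulVec, star_sum, star_mul',
        Matrix.star_apply, Finset.mul_sum]
      rw [Finset.sum_comm]
      refine Finset.sum_congr rfl fun l _ => Finset.sum_congr rfl fun m _ => ?_
      have hl : star (p' l) = p' l := congrFun hstarp l
      have hm : star (p' m) = p' m := congrFun hstarp m
      rw [hl, hm]
      ring
    simp only [hq, h1, Complex.star_def, Complex.conj_re]
  -- Cauchy–Schwarz for the form q
  have hcs : ∀ a b : M, q a b ≤ Real.sqrt (q a a) * Real.sqrt (q b b) := by
    intro a b
    have qexp : ∀ t : ℝ, q a a * (t * t) + (2 * q a b) * t + q b b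
        = q (b + (t : ℂ) • a) (b + (t : ℂ) • a) := by
      intro t
      have e1 : mI (b + (t : ℂ) • a) (b + (t : ℂ) • a)
          = mI b b + (t : ℂ) • mI a b + ((t : ℂ) • mI b a + (t : ℂ) • ((t : ℂ) • mI a a)) := by
        rw [h_add, hadd1, hadd1, hsmul1, h_smul, h_smul, hsmul1]
      simp only [hq, e1, Matrix.add_mulVec, Matrix.smul_mulVec,
        dotProduct_add, dotProduct_smul, smul_eq_mul,
        Complex.add_re, Complex.re_ofReal_mul]
      have hsy : (p' ⬝ᵥ (mI b a).mulVec p').re = (p' ⬝ᵥ (mI a b).mulVec p').re := hqsymm b a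
      rw [hsy]
      ring
    have hquad : ∀ t : ℝ, 0 ≤ q a a * (t * t) + (2 * q a b) * t + q b b := by
      intro t; rw [qexp t]; exact hq_nonneg _
    have hdisc := discrim_le_zero hquad
    rw [discrim] at hdisc
    have h2 : (q a b) ^ 2 ≤ q a a * q b b := by nlinarith [hdisc]
    calc q a b ≤ |q a b| := le_abs_self _
      _ = Real.sqrt ((q a b) ^ 2) := (Real.sqrt_sq_eq_abs _).symm
      _ ≤ Real.sqrt (q a a * q b b) := Real.sqrt_le_sqrt h2
      _ = Real.sqrt (q a a) * Real.sqrt (q b b) := Real.sqrt_mul (hq_nonneg a) _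
  -- the sign vectors and corresponding module elements
  set ε : (Fin n → Fin d → Bool) → Fin n → Fin d → ℝ :=
    fun σ i m => if σ i m then 1 else -1 with hε
  set C : (Fin n → Fin d → Bool) → Fin n → Matrix (Fin d) (Fin d) ℂ :=
    fun σ i => vecMulVec (fun m => (ε σ i m : ℂ)) p' with hC
  set u : (Fin n → Fin d → Bool) → M :=
    fun σ => ∑ i, MulOpposite.op (C σ i) • φ (x i) with hu
  -- dot products of sums of matrices
  have hdotsum : ∀ (s : Finset (Fin n)) (A : Fin n → Matrix (Fin d) (Fin d) ℂ),
      p' ⬝ᵥ (∑ i ∈ s, A i).mulVec p' = ∑ i ∈ s, p' ⬝ᵥ (A i).mulVec p' := by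
    intro s A
    induction s using Finset.induction_on with
    | empty => simp
    | insert _ _ hns ih =>
        rw [Finset.sum_insert hns, Finset.sum_insert hns, Matrix.add_mulVec,
          dotProduct_add, ih]
  -- computation of q (u σ) f
  have hQuf : ∀ (σ : Fin n → Fin d → Bool) (f : M),
      q (u σ) f = ∑ i, ∑ m, ε σ i m * ((mI (φ (x i)) f).mulVec p' m).re := by
    intro σ f
    have e1 : mI (u σ) f = ∑ i, (C σ i)ᴴ * mI (φ (x i)) f := by
      rw [hu]
      rw [hsum1]
      exact Finset.sum_congr rfl fun i _ => hopsmul1 _ _ _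
    rw [hq]
    simp only [e1, hdotsum]
    rw [Complex.re_sum]
    refine Finset.sum_congr rfl fun i _ => ?_
    rw [hC]
    rw [stmt7_keyA p hp (ε σ i) (mI (φ (x i)) f)]
    rw [show ((fun m => ((ε σ i m : ℝ) : ℂ)) ⬝ᵥ (mI (φ (x i)) f).mulVec p')
        = ∑ m, ((ε σ i m : ℝ) : ℂ) * ((mI (φ (x i)) f).mulVec p') m from rfl]
    rw [Complex.re_sum]
    exact Finset.sum_congr rfl fun m _ => Complex.re_ofReal_mul _ _
  -- computation of q (u σ) (u σ)
  have hQuu : ∀ (σ : Fin n → Fin d → Bool),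
      q (u σ) (u σ) = ∑ i, ∑ j, ∑ m, ∑ m',
        ε σ i m * ε σ j m' * ((k₁ (x i) (x j)) m m').re := by
    intro σ
    have e2 : ∀ i, mI (φ (x i)) (u σ) = ∑ j, k₁ (x i) (x j) * C σ j := by
      intro i
      rw [hu, hsum2]
      exact Finset.sum_congr rfl fun j _ => by rw [h_opsmul, hk]
    rw [hQuf σ (u σ)]
    refine Finset.sum_congr rfl fun i _ => ?_
    rw [e2 i]
    have hmvsum : ∀ (s : Finset (Fin n)) (A : Fin n → Matrix (Fin d) (Fin d) ℂ),
        (∑ j ∈ s, A j).mulVec p' = ∑ j ∈ s, (A j).mulVec p' := by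
      intro s A
      induction s using Finset.induction_on with
      | empty => simp
      | insert _ _ hns ih =>
          rw [Finset.sum_insert hns, Finset.sum_insert hns, Matrix.add_mulVec, ih]
    have e3 : ((∑ j, k₁ (x i) (x j) * C σ j).mulVec p')
        = ∑ j, (k₁ (x i) (x j)).mulVec (fun m => ((ε σ j m : ℝ) : ℂ)) := by
      rw [hmvsum]
      refine Finset.sum_congr rfl fun j _ => ?_
      rw [← Matrix.mulVec_mulVec, hC, stmt7_keyB p hp (ε σ j)]
    rw [e3]
    have e4 : ∀ (j : Fin n) (m : Fin d),
        (((k₁ (x i) (x j)).mulVec (fun m' => ((ε σ j m' : ℝ) : ℂ))) m).re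
        = ∑ m', ε σ j m' * ((k₁ (x i) (x j)) m m').re := by
      intro j m
      rw [show (((k₁ (x i) (x j)).mulVec (fun m' => ((ε σ j m' : ℝ) : ℂ))) m)
          = ∑ m', (k₁ (x i) (x j)) m m' * ((ε σ j m' : ℝ) : ℂ) from rfl]
      rw [Complex.re_sum]
      refine Finset.sum_congr rfl fun m' _ => ?_
      rw [mul_comm, Complex.re_ofReal_mul]
    calc ∑ m, ε σ i m * ((∑ j, (k₁ (x i) (x j)).mulVec (fun m' => ((ε σ j m' : ℝ) : ℂ))) m).re
        = ∑ m, ∑ j, ε σ i m * ∑ m', ε σ j m' * ((k₁ (x i) (x j)) m m').re := by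
          refine Finset.sum_congr rfl fun m _ => ?_
          rw [Finset.sum_apply, Complex.re_sum, Finset.mul_sum]
          exact Finset.sum_congr rfl fun j _ => by rw [e4 j m]
      _ = ∑ j, ∑ m, ∑ m', ε σ i m * ε σ j m' * ((k₁ (x i) (x j)) m m').re := by
          rw [Finset.sum_comm]
          refine Finset.sum_congr rfl fun j _ => Finset.sum_congr rfl fun m _ => ?_
          rw [Finset.mul_sum]
          exact Finset.sum_congr rfl fun m' _ => by ring
  -- nonnegativity and norm bound for q on the ball
  have hqffB : ∀ f : {f : M // Real.sqrt ‖mI f f‖ ≤ B₁}, Real.sqrt (q (f : M) (f : M)) ≤ B₁ := by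
    intro f
    have h1 : q (f : M) (f : M) ≤ ‖mI (f : M) (f : M)‖ := by
      rw [hq]; exact stmt7_opnorm p hp _
    exact (Real.sqrt_le_sqrt h1).trans f.2
  -- per-σ bound on the supremum
  have hsup : ∀ σ : Fin n → Fin d → Bool,
      (⨆ f : {f : M // Real.sqrt ‖mI f f‖ ≤ B₁},
          (1 / (n : ℝ)) * ∑ i, ∑ l, (if σ i l then (1 : ℝ) else -1) *
            (((mI (φ (x i)) (f : M)).mulVec p') l).re)
        ≤ (1 / (n : ℝ)) * (B₁ * Real.sqrt (q (u σ) (u σ))) := by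
    intro σ
    refine ciSup_le fun f => ?_
    have he : ∑ i, ∑ l, (if σ i l then (1 : ℝ) else -1) *
        (((mI (φ (x i)) (f : M)).mulVec p') l).re = q (u σ) (f : M) := by
      rw [hQuf σ (f : M)]
    rw [he]
    refine mul_le_mul_of_nonneg_left ?_ (by positivity)
    calc q (u σ) (f : M) ≤ Real.sqrt (q (u σ) (u σ)) * Real.sqrt (q (f : M) (f : M)) :=
          hcs _ _
      _ ≤ Real.sqrt (q (u σ) (u σ)) * B₁ :=
          mul_le_mul_of_nonneg_left (hqffB f) (Real.sqrt_nonneg _)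
      _ = B₁ * Real.sqrt (q (u σ) (u σ)) := mul_comm _ _
  -- the expectation of q (u σ) (u σ)
  set T : ℝ := ∑ i, (Matrix.trace (k₁ (x i) (x i))).re with hT
  have hsumr : ∑ σ : Fin n → Fin d → Bool, q (u σ) (u σ) = (2 : ℝ) ^ (n * d) * T := by
    calc ∑ σ : Fin n → Fin d → Bool, q (u σ) (u σ)
        = ∑ σ : Fin n → Fin d → Bool, ∑ i, ∑ j, ∑ m, ∑ m',
            ε σ i m * ε σ j m' * ((k₁ (x i) (x j)) m m').re :=
          Finset.sum_congr rfl fun σ _ => hQuu σ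
      _ = ∑ i, ∑ j, ∑ m, ∑ m',
            (∑ σ : Fin n → Fin d → Bool, ε σ i m * ε σ j m') *
              ((k₁ (x i) (x j)) m m').re := by
          rw [Finset.sum_comm]
          refine Finset.sum_congr rfl fun i _ => ?_
          rw [Finset.sum_comm]
          refine Finset.sum_congr rfl fun j _ => ?_
          rw [Finset.sum_comm]
          refine Finset.sum_congr rfl fun m _ => ?_
          rw [Finset.sum_comm]
          refine Finset.sum_congr rfl fun m' _ => ?_
          rw [Finset.sum_mul]
      _ = ∑ i, ∑ m, (2 : ℝ) ^ (n * d) * ((k₁ (x i) (x i)) m m).re := by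
          refine Finset.sum_congr rfl fun i _ => ?_
          have hro : ∀ (j : Fin n) (m m' : Fin d),
              (∑ σ : Fin n → Fin d → Bool, ε σ i m * ε σ j m')
              = if i = j ∧ m = m' then (2:ℝ) ^ (n * d) else 0 := by
            intro j m m'
            rw [hε]
            exact stmt7_rad_orth i j m m'
          rw [Finset.sum_congr rfl fun j _ => Finset.sum_congr rfl fun m _ =>
            Finset.sum_congr rfl fun m' _ => by rw [hro j m m']]
          rw [Finset.sum_eq_single i (fun j _ hji => by simp [Ne.symm hji])
            (fun h => absurd (Finset.mem_univ i) h)]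
          refine Finset.sum_congr rfl fun m _ => ?_
          simp only [true_and, ite_mul, zero_mul]
          rw [Finset.sum_ite_eq]
          simp
      _ = (2 : ℝ) ^ (n * d) * T := by
          rw [hT, Finset.mul_sum]
          refine Finset.sum_congr rfl fun i _ => ?_
          rw [Matrix.trace, Complex.re_sum, Finset.mul_sum]
          exact Finset.sum_congr rfl fun m _ => by rw [Matrix.diag_apply]
  -- put everything together
  have hN : (0:ℝ) < (2 : ℝ) ^ (n * d) := by positivity
  calc ((2 : ℝ) ^ (n * d))⁻¹ *
      (∑ σ : Fin n → Fin d → Bool,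
        ⨆ f : {f : M // Real.sqrt ‖mI f f‖ ≤ B₁},
          (1 / (n : ℝ)) * ∑ i, ∑ l, (if σ i l then (1 : ℝ) else -1) *
            (((mI (φ (x i)) (f : M)).mulVec p') l).re)
      ≤ ((2 : ℝ) ^ (n * d))⁻¹ *
        ∑ σ : Fin n → Fin d → Bool, (1 / (n : ℝ)) * (B₁ * Real.sqrt (q (u σ) (u σ))) := by
        exact mul_le_mul_of_nonneg_left
          (Finset.sum_le_sum fun σ _ => hsup σ) (by positivity)
    _ = (B₁ / n) * (((2 : ℝ) ^ (n * d))⁻¹ *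
          ∑ σ : Fin n → Fin d → Bool, Real.sqrt (q (u σ) (u σ))) := by
        rw [show ∑ σ : Fin n → Fin d → Bool, (1 / (n : ℝ)) * (B₁ * Real.sqrt (q (u σ) (u σ)))
            = (B₁ / n) * ∑ σ : Fin n → Fin d → Bool, Real.sqrt (q (u σ) (u σ)) by
          rw [Finset.mul_sum]; exact Finset.sum_congr rfl fun σ _ => by ring]
        ring
    _ ≤ (B₁ / n) * (((2 : ℝ) ^ (n * d))⁻¹ *
          (Real.sqrt ((2 : ℝ) ^ (n * d)) *
            Real.sqrt (∑ σ : Fin n → Fin d → Bool, q (u σ) (u σ)))) := by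
        refine mul_le_mul_of_nonneg_left (mul_le_mul_of_nonneg_left ?_ (by positivity))
          (by positivity)
        have hcs2 := Real.sum_sqrt_mul_sqrt_le (f := fun _ => (1:ℝ))
          (g := fun σ => q (u σ) (u σ)) (Finset.univ : Finset (Fin n → Fin d → Bool))
          (fun _ => zero_le_one) (fun σ => hq_nonneg _)
        have hcard : ∑ _σ : Fin n → Fin d → Bool, (1:ℝ) = (2 : ℝ) ^ (n * d) := by
          rw [Finset.sum_const, Finset.card_univ, nsmul_eq_mul, mul_one]
          rw [show Fintype.card (Fin n → Fin d → Bool) = 2 ^ (n * d) by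
            rw [Fintype.card_fun, Fintype.card_fun, Fintype.card_bool, Fintype.card_fin,
              Fintype.card_fin, ← pow_mul, Nat.mul_comm]]
          push_cast; ring
        simpa [hcard] using hcs2
    _ = (B₁ / n) * Real.sqrt T := by
        rw [hsumr, Real.sqrt_mul hN.le]
        rw [show Real.sqrt ((2:ℝ)^(n*d)) * (Real.sqrt ((2:ℝ)^(n*d)) * Real.sqrt T)
          = (Real.sqrt ((2:ℝ)^(n*d)) * Real.sqrt ((2:ℝ)^(n*d))) * Real.sqrt T by ring]
        rw [Real.mul_self_sqrt hN.le]
        field_simp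
end

section
/- (Deep RKHM representer theorem) Let h : A^n → ℝ₊ be any error function, g₁ an ℝ₊-valued function on bounded linear operators on M̃₁, and g₂ : ℝ₊ → ℝ₊ monotone (g₂(a) ≤ g₂(b) whenever a ≤ b). If the minimization of h(f_L∘⋯∘f_1(x_1), ..., f_L∘⋯∘f_1(x_n)) + g₁(P_{f_{L-1}}⋯P_{f_1}|_{Ṽ(x)}) + g₂(‖f_L‖_{M_L}) over f_j ∈ M_j has a solution, then it has a solution in which each f_j admits the representation f_j = Σ_{i=1}^n φ_j(x_i^{j-1}) c_{i,j} for some c_{i,j} ∈ A, where x_i^j = f_j∘⋯∘f_1(x_i) and x_i^0 = x_i. -/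
open Matrix ComplexOrder
open scoped Matrix.Norms.L2Operator

/-- Iterated composition: `iterSeq g m = g (m-1) ∘ ⋯ ∘ g 0`. -/
def iterSeq {α : Type*} (g : ℕ → α → α) : ℕ → α → α
  | 0 => id
  | m + 1 => fun a => g m (iterSeq g m a)

open MulOpposite
open scoped InnerProductSpace

noncomputable section
set_option maxHeartbeats 1000000


lemma traceCT {d : ℕ} (B : Matrix (Fin d) (Fin d) ℂ) :
    (Bᴴ * B).trace = ((∑ j, ∑ i, Complex.normSq (B i j) : ℝ) : ℂ) := by
  push_cast
  simp only [Matrix.trace, Matrix.diag, Matrix.mul_apply, Matrix.conjTranspose_apply]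
  congr 1
  ext j
  congr 1
  ext i
  rw [Complex.star_def, ← Complex.normSq_eq_conj_mul_self]

lemma ct_trace_zero {d : ℕ} {B : Matrix (Fin d) (Fin d) ℂ} (h : (Bᴴ * B).trace = 0) :
    B = 0 := by
  rw [traceCT, Complex.ofReal_eq_zero] at h
  ext i j
  have h1 := (Finset.sum_eq_zero_iff_of_nonneg (fun j _ =>
    Finset.sum_nonneg fun i _ => Complex.normSq_nonneg (B i j))).mp h j (Finset.mem_univ _)
  have h2 := (Finset.sum_eq_zero_iff_of_nonneg (fun i _ =>
    Complex.normSq_nonneg (B i j))).mp h1 i (Finset.mem_univ _)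
  simpa using Complex.normSq_eq_zero.mp h2

lemma psd_trace_re_nonneg {d : ℕ} {M : Matrix (Fin d) (Fin d) ℂ} (hM : M.PosSemidef) :
    0 ≤ M.trace.re := by
  obtain ⟨B, rfl⟩ : ∃ B : Matrix (Fin d) (Fin d) ℂ, M = Bᴴ * B := by
    open scoped MatrixOrder in
    exact CStarAlgebra.nonneg_iff_eq_star_mul_self.mp (Matrix.nonneg_iff_posSemidef.mpr hM)
  rw [traceCT, Complex.ofReal_re]
  exact Finset.sum_nonneg fun j _ => Finset.sum_nonneg fun i _ => Complex.normSq_nonneg _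

lemma psd_trace_eq_zero {d : ℕ} {M : Matrix (Fin d) (Fin d) ℂ} (hM : M.PosSemidef)
    (h : M.trace = 0) : M = 0 := by
  obtain ⟨B, rfl⟩ : ∃ B : Matrix (Fin d) (Fin d) ℂ, M = Bᴴ * B := by
    open scoped MatrixOrder in
    exact CStarAlgebra.nonneg_iff_eq_star_mul_self.mp (Matrix.nonneg_iff_posSemidef.mpr hM)
  rw [ct_trace_zero h]
  simp

lemma psd_norm_le {d : ℕ} {A B : Matrix (Fin d) (Fin d) ℂ} (hA : A.PosSemidef)
    (hBA : (B - A).PosSemidef) : ‖A‖ ≤ ‖B‖ := by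
  classical
  set TA := Matrix.toEuclideanCLM (𝕜 := ℂ) (n := Fin d) A with hTA
  set TB := Matrix.toEuclideanCLM (𝕜 := ℂ) (n := Fin d) B with hTB
  have hnA : ‖A‖ = ‖TA‖ := Matrix.cstar_norm_def A
  have hnB : ‖B‖ = ‖TB‖ := Matrix.cstar_norm_def B
  have hsa : star TA = TA := by
    rw [hTA, ← map_star]
    congr 1
    rw [Matrix.star_eq_conjTranspose, hA.isHermitian]
  have hsym : ∀ u w : EuclideanSpace ℂ (Fin d), ⟪TA u, w⟫_ℂ = ⟪u, TA w⟫_ℂ := by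
    intro u w
    conv_lhs => rw [← hsa, ContinuousLinearMap.star_eq_adjoint]
    rw [ContinuousLinearMap.adjoint_inner_left]
  have hip : ∀ (M : Matrix (Fin d) (Fin d) ℂ) (u : EuclideanSpace ℂ (Fin d)),
      ⟪u, Matrix.toEuclideanCLM (𝕜 := ℂ) (n := Fin d) M u⟫_ℂ =
        dotProduct (star (WithLp.equiv _ _ u)) (M *ᵥ (WithLp.equiv _ _ u)) := by
    intro M u
    simp [EuclideanSpace.inner_eq_star_dotProduct, dotProduct, mul_comm]
  have hA0 : ∀ u : EuclideanSpace ℂ (Fin d), 0 ≤ (⟪u, TA u⟫_ℂ).re := by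
    intro u
    rw [hTA, hip]
    exact (Complex.le_def.mp ((Matrix.posSemidef_iff_dotProduct_mulVec.mp hA).2 (WithLp.equiv _ _ u))).1
  have hle : ∀ u : EuclideanSpace ℂ (Fin d), (⟪u, TA u⟫_ℂ).re ≤ ‖B‖ * (‖u‖ * ‖u‖) := by
    intro u
    have h1 : 0 ≤ (dotProduct (star (WithLp.equiv _ _ u))
        ((B - A) *ᵥ (WithLp.equiv _ _ u))).re := (Complex.le_def.mp ((Matrix.posSemidef_iff_dotProduct_mulVec.mp hBA).2 _)).1
    rw [Matrix.sub_mulVec, dotProduct_sub, Complex.sub_re] at h1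
    have h2 : (⟪u, TA u⟫_ℂ).re ≤ (⟪u, TB u⟫_ℂ).re := by
      rw [hTA, hTB, hip, hip]
      linarith
    have h3 : (⟪u, TB u⟫_ℂ).re ≤ ‖(⟪u, TB u⟫_ℂ)‖ := Complex.re_le_norm _
    have h4 : ‖(⟪u, TB u⟫_ℂ)‖ ≤ ‖u‖ * ‖TB u‖ := norm_inner_le_norm u (TB u)
    have h5 : ‖TB u‖ ≤ ‖TB‖ * ‖u‖ := TB.le_opNorm u
    have h6 : 0 ≤ ‖u‖ := norm_nonneg u
    rw [hnB]
    nlinarith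
  rw [hnA]
  refine ContinuousLinearMap.opNorm_le_bound _ (norm_nonneg B) fun y => ?_
  by_cases hy : TA y = 0
  · rw [hy, norm_zero]
    positivity
  have hy0 : y ≠ 0 := fun h0 => hy (by rw [h0, map_zero])
  have hny : 0 < ‖y‖ := norm_pos_iff.mpr hy0
  have hnTy : 0 < ‖TA y‖ := lt_of_le_of_ne (norm_nonneg _) (Ne.symm (norm_ne_zero_iff.mpr hy))
  set t : ℝ := ‖y‖ / ‖TA y‖ with ht
  have htpos : 0 < t := div_pos hny hnTy
  set x : EuclideanSpace ℂ (Fin d) := (t : ℂ) • TA y with hx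
  have hnx : ‖x‖ = ‖y‖ := by
    rw [hx, norm_smul, Complex.norm_real, Real.norm_eq_abs, abs_of_pos htpos, ht,
      div_mul_cancel₀ _ (ne_of_gt hnTy)]
  have hrex : (⟪x, TA y⟫_ℂ).re = ‖y‖ * ‖TA y‖ := by
    rw [hx, inner_smul_left, Complex.conj_ofReal, inner_self_eq_norm_sq_to_K]
    have hc : ((t : ℂ) * (‖TA y‖ : ℂ) ^ 2).re = t * ‖TA y‖ ^ 2 := by
      norm_cast
    have hc2 : t * ‖TA y‖ ^ 2 = ‖y‖ * ‖TA y‖ := by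
      rw [ht]
      field_simp
    exact hc.trans hc2
  have hyx : ⟪y, TA x⟫_ℂ = starRingEnd ℂ ⟪x, TA y⟫_ℂ := by
    rw [← hsym y x, ← inner_conj_symm]
  have e1 : (⟪x + y, TA (x + y)⟫_ℂ) =
      ⟪x, TA x⟫_ℂ + ⟪y, TA y⟫_ℂ + (⟪x, TA y⟫_ℂ + ⟪y, TA x⟫_ℂ) := by
    rw [map_add, inner_add_left, inner_add_right, inner_add_right]
    ring
  have e2 : (⟪x - y, TA (x - y)⟫_ℂ) =
      ⟪x, TA x⟫_ℂ + ⟪y, TA y⟫_ℂ - (⟪x, TA y⟫_ℂ + ⟪y, TA x⟫_ℂ) := by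
    rw [map_sub, inner_sub_left, inner_sub_right, inner_sub_right]
    ring
  have hpol : 4 * (⟪x, TA y⟫_ℂ).re =
      (⟪x + y, TA (x + y)⟫_ℂ).re - (⟪x - y, TA (x - y)⟫_ℂ).re := by
    rw [e1, e2, hyx]
    simp only [Complex.add_re, Complex.sub_re, Complex.conj_re]
    ring
  have hpar : ‖x + y‖ * ‖x + y‖ + ‖x - y‖ * ‖x - y‖ = 2 * (‖x‖ * ‖x‖ + ‖y‖ * ‖y‖) :=
    by simpa only [sq] using parallelogram_law_with_norm ℂ x y
  have hb1 : (⟪x + y, TA (x + y)⟫_ℂ).re ≤ ‖B‖ * (‖x + y‖ * ‖x + y‖) := hle _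
  have hb2 : 0 ≤ (⟪x - y, TA (x - y)⟫_ℂ).re := hA0 _
  have hnB0 : 0 ≤ ‖B‖ := norm_nonneg B
  set a1 : ℝ := ‖x + y‖ with ha1
  set a2 : ℝ := ‖x - y‖ with ha2
  set ny : ℝ := ‖y‖ with hny'
  set nT : ℝ := ‖TA y‖ with hnT'
  rw [hnx] at hpar
  have h01 : 0 ≤ a2 * a2 := mul_self_nonneg a2
  have hsq : a1 * a1 ≤ 4 * (ny * ny) := by linarith
  have hmain : 4 * (ny * nT) ≤ ‖B‖ * (4 * (ny * ny)) := by
    rw [← hrex, hpol]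
    nlinarith [mul_le_mul_of_nonneg_left hsq hnB0]
  refine le_of_mul_le_mul_left ?_ (by positivity : (0:ℝ) < 4 * ny)
  calc (4 * ny) * nT = 4 * (ny * nT) := by ring
    _ ≤ ‖B‖ * (4 * (ny * ny)) := hmain
    _ = 4 * ny * (‖B‖ * ny) := by ring

lemma proj_lemma {d n : ℕ} {E : Type*} [AddCommGroup E] [Module ℂ E]
    [Module (Matrix (Fin d) (Fin d) ℂ)ᵐᵒᵖ E]
    (mI : E → E → Matrix (Fin d) (Fin d) ℂ)
    (h_add : ∀ x y z : E, mI x (y + z) = mI x y + mI x z)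
    (h_smul : ∀ (z : ℂ) (x y : E), mI x (z • y) = z • mI x y)
    (h_opsmul : ∀ (a : Matrix (Fin d) (Fin d) ℂ) (x y : E), mI x (op a • y) = mI x y * a)
    (h_star : ∀ x y : E, star (mI x y) = mI y x)
    (h_pos : ∀ x : E, (mI x x).PosSemidef)
    (h_def : ∀ x : E, mI x x = 0 → x = 0)
    (v : Fin n → E) (f : E) :
    ∃ c : Fin n → Matrix (Fin d) (Fin d) ℂ,
      (∀ i, mI (v i) (∑ k, op (c k) • v k) = mI (v i) f) ∧
      ‖mI (∑ k, op (c k) • v k) (∑ k, op (c k) • v k)‖ ≤ ‖mI f f‖ := by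
  classical
  -- derived linearity facts
  have h_zeror : ∀ x : E, mI x 0 = 0 := by
    intro x
    have h0 := h_add x 0 0
    rw [add_zero] at h0
    exact add_left_cancel (h0.symm.trans (add_zero _).symm)
  have h_addl : ∀ x y z : E, mI (x + y) z = mI x z + mI y z := by
    intro x y z
    rw [← h_star, h_add, star_add, h_star, h_star]
  have h_smull : ∀ (z : ℂ) (x y : E), mI (z • x) y = (starRingEnd ℂ z) • mI x y := by
    intro z x y
    rw [← h_star, h_smul]
    rw [Matrix.star_eq_conjTranspose, Matrix.conjTranspose_smul, ← Matrix.star_eq_conjTranspose,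
      h_star]
    rfl
  have h_opsmull : ∀ (a : Matrix (Fin d) (Fin d) ℂ) (x y : E),
      mI (op a • x) y = aᴴ * mI x y := by
    intro a x y
    have h1 : mI (op a • x) y = star (mI y (op a • x)) := (h_star _ _).symm
    rw [h1, h_opsmul, Matrix.star_eq_conjTranspose, Matrix.conjTranspose_mul,
      ← Matrix.star_eq_conjTranspose (mI y x), h_star]
  have h_negr : ∀ x y : E, mI x (-y) = -(mI x y) := by
    intro x y
    rw [← neg_one_smul ℂ y, h_smul]
    simp
  have h_subr : ∀ x y z : E, mI x (y - z) = mI x y - mI x z := by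
    intro x y z
    rw [sub_eq_add_neg, h_add, h_negr, sub_eq_add_neg]
  have compat : ∀ (z : ℂ) (a : Matrix (Fin d) (Fin d) ℂ) (y : E),
      z • (op a • y) = op (z • a) • y := by
    intro z a y
    have hu : ∀ w : E, mI w (z • (op a • y) - op (z • a) • y) = 0 := by
      intro w
      rw [h_subr, h_smul, h_opsmul, h_opsmul, Matrix.mul_smul, sub_self]
    have := h_def _ (hu _)
    exact sub_eq_zero.mp this
  have h_sumr : ∀ (y : E) (w : Fin n → E), mI y (∑ k, w k) = ∑ k, mI y (w k) := by
    intro y w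
    exact map_sum (AddMonoidHom.mk' (fun u => mI y u) (fun a b => h_add y a b)) w Finset.univ
  have h_suml : ∀ (y : E) (w : Fin n → E), mI (∑ k, w k) y = ∑ k, mI (w k) y := by
    intro y w
    rw [← h_star, h_sumr]
    rw [star_sum]
    congr 1
    ext k
    rw [h_star]
  -- inner product space structure
  let core : InnerProductSpace.Core ℂ E :=
  { inner := fun x y => (mI x y).trace
    conj_inner_symm := fun x y => by
      show star ((mI y x).trace) = (mI x y).trace
      rw [← Matrix.trace_conjTranspose, ← Matrix.star_eq_conjTranspose, h_star]
    re_inner_nonneg := fun x => psd_trace_re_nonneg (h_pos x)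
    add_left := fun x y z => by
      show (mI (x + y) z).trace = (mI x z).trace + (mI y z).trace
      rw [h_addl, Matrix.trace_add]
    smul_left := fun x y r => by
      show (mI (r • x) y).trace = starRingEnd ℂ r * (mI x y).trace
      rw [h_smull, Matrix.trace_smul]
      rfl
    definite := fun x hx => h_def x (psd_trace_eq_zero (h_pos x) hx) }
  letI : NormedAddCommGroup E := @InnerProductSpace.Core.toNormedAddCommGroup ℂ E _ _ _ core
  letI : InnerProductSpace ℂ E := InnerProductSpace.ofCore core.toCore
  have hinner : ∀ x y : E, ⟪x, y⟫_ℂ = (mI x y).trace := fun _ _ => rfl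
  -- the submodule
  let T : (Fin n → Matrix (Fin d) (Fin d) ℂ) →ₗ[ℂ] E :=
  { toFun := fun c => ∑ k, op (c k) • v k
    map_add' := fun c c' => by
      rw [← Finset.sum_add_distrib]
      refine Finset.sum_congr rfl fun k _ => ?_
      rw [Pi.add_apply, op_add, add_smul]
    map_smul' := fun z c => by
      show (∑ k, op ((z • c) k) • v k) = z • ∑ k, op (c k) • v k
      rw [Finset.smul_sum]
      exact Finset.sum_congr rfl fun k _ => by rw [Pi.smul_apply, compat] }
  let W : Submodule ℂ E := LinearMap.range T
  haveI : FiniteDimensional ℂ W := Module.Finite.range T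
  haveI : CompleteSpace W := FiniteDimensional.complete ℂ W
  set p : E := (Submodule.orthogonalProjectionOnto W f : E) with hp
  obtain ⟨c, hc⟩ := (Submodule.orthogonalProjectionOnto W f).2
  have horth : f - p ∈ Wᗮ := Submodule.sub_starProjection_mem_orthogonal (K := W) f
  -- A-valued orthogonality
  have key : ∀ i, mI (v i) (f - p) = 0 := by
    intro i
    set M := mI (v i) (f - p) with hM
    have hmem : op M • v i ∈ W := by
      have hsum : (∑ k, op ((Pi.single i M : Fin n → Matrix (Fin d) (Fin d) ℂ) k) • v k)
          = op M • v i := by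
        rw [Finset.sum_eq_single i]
        · rw [Pi.single_eq_same]
        · intro k _ hk
          rw [Pi.single_eq_of_ne hk, op_zero, zero_smul]
        · intro hi
          exact absurd (Finset.mem_univ i) hi
      exact ⟨Pi.single i M, hsum⟩
    have h0 : ⟪op M • v i, f - p⟫_ℂ = 0 :=
      (Submodule.mem_orthogonal W (f - p)).mp horth _ hmem
    rw [hinner, h_opsmull] at h0
    exact ct_trace_zero h0
  have keyvals : ∀ i, mI (v i) p = mI (v i) f := by
    intro i
    have := key i
    rw [h_subr] at this
    exact (sub_eq_zero.mp this).symm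
  -- norm inequality
  have hpW : (∑ k, op (c k) • v k) = p := hc
  set q : E := f - p with hq
  have qorth : mI p q = 0 := by
    rw [← hpW, h_suml]
    refine Finset.sum_eq_zero fun k _ => ?_
    rw [h_opsmull, key k, mul_zero]
  have qorth' : mI q p = 0 := by
    rw [← h_star, qorth, star_zero]
  have decomp : mI f f = mI p p + mI q q := by
    have hf : p + q = f := by rw [hq]; abel
    calc mI f f = mI (p + q) (p + q) := by rw [hf]
      _ = mI p p + mI p q + (mI q p + mI q q) := by
          rw [h_addl, h_add, h_add]
      _ = mI p p + mI q q := by rw [qorth, qorth']; abel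
  have hdiff : (mI f f - mI p p).PosSemidef := by
    have hd : mI f f - mI p p = mI q q := by rw [decomp]; abel
    rw [hd]
    exact h_pos _
  refine ⟨c, ?_, ?_⟩
  · intro i
    rw [hpW]
    exact keyvals i
  · rw [hpW]
    exact psd_norm_le (h_pos p) hdiff


/-- Deep RKHM representer theorem.  Layers are numbered `0,…,L-1`; `E j` is
the RKHM of layer `j` over `A = ℂ^{d×d}` with `A`-valued inner product `mI j` and feature map
`φ j : A → E j`; the function associated with `f_j ∈ E j` is `a ↦ ⟪φ j a, f j⟫` and
`x i ^ j = iterSeq … j (x i)` are the intermediate outputs.  `Pf f` is the composed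
Perron–Frobenius operator `P_{f_{L-1}} ⋯ P_{f_1}` restricted to the submodule `Ṽ(x)` generated
by `φ 0 (x 1), …, φ 0 (x n)`: it maps `φ 0 (x i)` to `φ (L-1) (x i ^ {L-1})` and is determined
by these values.  Let `h : A^n → ℝ₊` be an error function, `g₁` an `ℝ₊`-valued function on
operators on `M̃₁`, and `g₂ : ℝ₊ → ℝ₊` monotone.  If the minimization of
`h(outputs) + g₁(Pf f) + g₂(‖f_{L-1}‖)` over tuples `f` has a solution, then it has a solution
in which each `f j` (`j < L`) is of the form `∑ i, φ j (x i ^ j) c i` for some `c i ∈ A`. -/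
theorem stmt11 {d n L : ℕ} (hL : 1 ≤ L)
    {E : ℕ → Type*} [∀ j, AddCommGroup (E j)] [∀ j, Module ℂ (E j)]
    [∀ j, Module (Matrix (Fin d) (Fin d) ℂ)ᵐᵒᵖ (E j)]
    (mI : ∀ j, E j → E j → Matrix (Fin d) (Fin d) ℂ)
    (h_add : ∀ j (x y z : E j), mI j x (y + z) = mI j x y + mI j x z)
    (h_smul : ∀ j (z : ℂ) (x y : E j), mI j x (z • y) = z • mI j x y)
    (h_opsmul : ∀ j (a : Matrix (Fin d) (Fin d) ℂ) (x y : E j),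
      mI j x (MulOpposite.op a • y) = mI j x y * a)
    (h_star : ∀ j (x y : E j), star (mI j x y) = mI j y x)
    (h_pos : ∀ j (x : E j), (mI j x x).PosSemidef)
    (h_def : ∀ j (x : E j), mI j x x = 0 → x = 0)
    (φ : ∀ j, Matrix (Fin d) (Fin d) ℂ → E j)
    (x : Fin n → Matrix (Fin d) (Fin d) ℂ)
    (h : (Fin n → Matrix (Fin d) (Fin d) ℂ) → ℝ) (hh : ∀ v, 0 ≤ h v)
    (g₁ : (E 0 →ₗ[ℂ] E (L - 1)) → ℝ) (hg₁ : ∀ T, 0 ≤ g₁ T)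
    (g₂ : ℝ → ℝ) (hg₂nonneg : ∀ a, 0 ≤ g₂ a)
    (hg₂mono : ∀ a b : ℝ, 0 ≤ a → a ≤ b → g₂ a ≤ g₂ b)
    (Pf : (∀ j, E j) → (E 0 →ₗ[ℂ] E (L - 1)))
    (hPf : ∀ (f : ∀ j, E j) (i : Fin n),
      Pf f (φ 0 (x i)) =
        φ (L - 1) (iterSeq (fun j a => mI j (φ j a) (f j)) (L - 1) (x i)))
    (hPdet : ∀ f f' : ∀ j, E j,
      (∀ i, Pf f (φ 0 (x i)) = Pf f' (φ 0 (x i))) → Pf f = Pf f')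
    (obj : (∀ j, E j) → ℝ)
    (hobj : ∀ f, obj f =
      h (fun i => iterSeq (fun j a => mI j (φ j a) (f j)) L (x i)) +
        g₁ (Pf f) + g₂ (Real.sqrt ‖mI (L - 1) (f (L - 1)) (f (L - 1))‖))
    (hexists : ∃ fmin, ∀ f, obj fmin ≤ obj f) :
    ∃ fstar : ∀ j, E j, (∀ f, obj fstar ≤ obj f) ∧
      ∀ j < L, ∃ c : Fin n → Matrix (Fin d) (Fin d) ℂ,
        fstar j = ∑ i, MulOpposite.op (c i) •
          φ j (iterSeq (fun j' a => mI j' (φ j' a) (fstar j')) j (x i)) := by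
  classical
  obtain ⟨fmin, hfmin⟩ := hexists
  have spec : ∀ (j : ℕ) (f : ∀ k, E k), ∃ c : Fin n → Matrix (Fin d) (Fin d) ℂ,
      (∀ i, mI j (φ j (iterSeq (fun j' a => mI j' (φ j' a) (f j')) j (x i)))
          (∑ k, MulOpposite.op (c k) •
            φ j (iterSeq (fun j' a => mI j' (φ j' a) (f j')) j (x k)))
        = mI j (φ j (iterSeq (fun j' a => mI j' (φ j' a) (f j')) j (x i))) (f j)) ∧
      ‖mI j (∑ k, MulOpposite.op (c k) •
            φ j (iterSeq (fun j' a => mI j' (φ j' a) (f j')) j (x k)))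
          (∑ k, MulOpposite.op (c k) •
            φ j (iterSeq (fun j' a => mI j' (φ j' a) (f j')) j (x k)))‖
        ≤ ‖mI j (f j) (f j)‖ := fun j f =>
    proj_lemma (mI j) (h_add j) (h_smul j) (h_opsmul j) (h_star j) (h_pos j) (h_def j)
      (fun i => φ j (iterSeq (fun j' a => mI j' (φ j' a) (f j')) j (x i))) (f j)
  choose cc hc1 hc2 using spec
  let F : ℕ → ∀ k, E k := fun m => Nat.rec fmin (fun m' Fm =>
    Function.update Fm m' (∑ k, MulOpposite.op (cc m' Fm k) •
      φ m' (iterSeq (fun j' a => mI j' (φ j' a) (Fm j')) m' (x k)))) m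
  have hFsucc : ∀ m, F (m + 1) = Function.update (F m) m
      (∑ k, MulOpposite.op (cc m (F m) k) •
        φ m (iterSeq (fun j' a => mI j' (φ j' a) (F m j')) m (x k))) := fun m => rfl
  have hFne : ∀ m k, k ≠ m → F (m + 1) k = F m k := by
    intro m k hk
    rw [hFsucc]
    exact Function.update_of_ne hk _ _
  have hFeq : ∀ m, F (m + 1) m = (∑ k, MulOpposite.op (cc m (F m) k) •
      φ m (iterSeq (fun j' a => mI j' (φ j' a) (F m j')) m (x k))) := by
    intro m
    rw [hFsucc]
    exact Function.update_self _ _ _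
  have stab : ∀ m m', m ≤ m' → ∀ k, k < m → F m' k = F m k := by
    intro m m'
    induction m' with
    | zero =>
      intro h0 k hk
      exact (Nat.not_lt_zero k ((Nat.le_zero.mp h0) ▸ hk)).elim
    | succ m'' ih =>
      intro hmm' k hk
      rcases Nat.eq_or_lt_of_le hmm' with he | hlt
      · rw [he]
      · have h1 : m ≤ m'' := Nat.lt_succ_iff.mp hlt
        rw [hFne m'' k (Nat.ne_of_lt (lt_of_lt_of_le hk h1))]
        exact ih h1 k hk
  have ptdep : ∀ (f f' : ∀ k, E k) (j : ℕ), (∀ k, k < j → f k = f' k) → ∀ i : Fin n,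
      iterSeq (fun j' a => mI j' (φ j' a) (f j')) j (x i)
        = iterSeq (fun j' a => mI j' (φ j' a) (f' j')) j (x i) := by
    intro f f' j
    induction j with
    | zero => intro _ i; rfl
    | succ j ih =>
      intro hj i
      show mI j (φ j (iterSeq (fun j' a => mI j' (φ j' a) (f j')) j (x i))) (f j)
        = mI j (φ j (iterSeq (fun j' a => mI j' (φ j' a) (f' j')) j (x i))) (f' j)
      rw [ih (fun k hk => hj k (Nat.lt_succ_of_lt hk)) i, hj j (Nat.lt_succ_self j)]
  have ptF : ∀ m j (i : Fin n),
      iterSeq (fun j' a => mI j' (φ j' a) (F (m + 1) j')) j (x i)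
        = iterSeq (fun j' a => mI j' (φ j' a) (F m j')) j (x i) := by
    intro m j i
    induction j with
    | zero => rfl
    | succ j ih =>
      show mI j (φ j (iterSeq (fun j' a => mI j' (φ j' a) (F (m + 1) j')) j (x i))) (F (m + 1) j)
        = mI j (φ j (iterSeq (fun j' a => mI j' (φ j' a) (F m j')) j (x i))) (F m j)
      rw [ih]
      by_cases hj : j = m
      · subst hj
        rw [hFeq j]
        exact hc1 j (F j) i
      · rw [hFne m j hj]
  have PfF : ∀ m, Pf (F (m + 1)) = Pf (F m) := by
    intro m
    refine hPdet _ _ fun i => ?_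
    rw [hPf, hPf, ptF m (L - 1) i]
  have objle : ∀ m, obj (F (m + 1)) ≤ obj (F m) := by
    intro m
    rw [hobj, hobj]
    have hterm : (fun i => iterSeq (fun j' a => mI j' (φ j' a) (F (m + 1) j')) L (x i))
        = (fun i => iterSeq (fun j' a => mI j' (φ j' a) (F m j')) L (x i)) :=
      funext fun i => ptF m L i
    rw [hterm, PfF m]
    refine add_le_add le_rfl ?_
    by_cases hm : m = L - 1
    · subst hm
      rw [hFeq (L - 1)]
      exact hg₂mono _ _ (Real.sqrt_nonneg _) (Real.sqrt_le_sqrt (hc2 (L - 1) (F (L - 1))))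
    · rw [hFne m (L - 1) (fun he => hm he.symm)]
  have objmin : ∀ m, obj (F m) ≤ obj fmin := by
    intro m
    induction m with
    | zero => exact le_refl _
    | succ m ih => exact (objle m).trans ih
  refine ⟨F L, fun f => (objmin L).trans (hfmin f), ?_⟩
  intro j hj
  refine ⟨cc j (F j), ?_⟩
  have h1 : F L j = F (j + 1) j :=
    stab (j + 1) L (Nat.succ_le_of_lt hj) j (Nat.lt_succ_self j)
  rw [h1, hFeq j]
  refine Finset.sum_congr rfl fun k _ => ?_
  rw [ptdep (F j) (F L) j (fun k' hk' => (stab j L (le_of_lt hj) k' hk').symm) k]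

end
end

section
/- Let [φ_j(x_1^{j-1}),...,φ_j(x_n^{j-1})] R_j = Q_j be a QR decomposition (Q_j has orthonormal columns in the Hilbert C*-module sense, R_j ∈ A^{n×n}) for j = 1 and j = L, and let G_L ∈ A^{n×n} be the Gram matrix with (i,l)-entry k_L(x_i^{L-1}, x_l^{L-1}). Then the operator norm of the restricted composed Perron–Frobenius operator satisfies ‖P_{f_{L-1}} ⋯ P_{f_1}|_{Ṽ(x)}‖_op = ‖R_L* G_L R_1‖_op. -/
open Matrix ComplexOrder
open scoped Matrix.Norms.L2Operator

/-- The canonical norm on `n × n` matrices over `A = ℂ^{d×d}`, obtained by flattening into an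
`nd × nd` complex matrix and taking the operator norm. -/
noncomputable def blockOpNorm {n d : ℕ}
    (M : Matrix (Fin n) (Fin n) (Matrix (Fin d) (Fin d) ℂ)) : ℝ :=
  ‖(Matrix.of fun (p q : Fin n × Fin d) => M p.1 q.1 p.2 q.2 :
      Matrix (Fin n × Fin d) (Fin n × Fin d) ℂ)‖

namespace Stmt13Aux

variable {m k : Type*} [Fintype m] [Fintype k] [DecidableEq m] [DecidableEq k]

omit [DecidableEq m] in
lemma sqrt_norm_cmul (X : Matrix m k ℂ) : Real.sqrt ‖Xᴴ * X‖ = ‖X‖ := by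
  rw [Matrix.l2_opNorm_conjTranspose_mul_self, Real.sqrt_mul_self (norm_nonneg X)]

omit [DecidableEq m] in
lemma myOpNorm_le_bound (A : Matrix m k ℂ) {K : ℝ} (hK : 0 ≤ K)
    (h : ∀ y : EuclideanSpace ℂ k, ‖(EuclideanSpace.equiv m ℂ).symm (A *ᵥ y)‖ ≤ K * ‖y‖) :
    ‖A‖ ≤ K := by
  rw [Matrix.l2_opNorm_def]
  exact ContinuousLinearMap.opNorm_le_bound _ hK h

omit [DecidableEq m] [DecidableEq k] in
lemma coord_le_norm (z : EuclideanSpace ℂ k) (j : k) : ‖z j‖ ≤ ‖z‖ := by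
  rw [EuclideanSpace.norm_eq, ← Real.sqrt_sq (norm_nonneg (z j))]
  exact Real.sqrt_le_sqrt <|
    Finset.single_le_sum (fun i _ => sq_nonneg ‖z i‖) (Finset.mem_univ j)

set_option linter.unusedSectionVars false in
lemma iSup_norm_mul [Nonempty k] (N : Matrix m m ℂ) :
    (⨆ B : {B : Matrix m k ℂ // ‖B‖ ≤ 1}, ‖N * (B : Matrix m k ℂ)‖) = ‖N‖ := by
  haveI : Nonempty {B : Matrix m k ℂ // ‖B‖ ≤ 1} := ⟨⟨0, by simp⟩⟩
  have hub : ∀ B : {B : Matrix m k ℂ // ‖B‖ ≤ 1}, ‖N * (B : Matrix m k ℂ)‖ ≤ ‖N‖ := by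
    intro B
    calc ‖N * (B : Matrix m k ℂ)‖ ≤ ‖N‖ * ‖(B : Matrix m k ℂ)‖ := Matrix.l2_opNorm_mul _ _
      _ ≤ ‖N‖ * 1 := mul_le_mul_of_nonneg_left B.2 (norm_nonneg _)
      _ = ‖N‖ := mul_one _
  have hbdd : BddAbove (Set.range fun B : {B : Matrix m k ℂ // ‖B‖ ≤ 1} =>
      ‖N * (B : Matrix m k ℂ)‖) := by
    refine ⟨‖N‖, ?_⟩
    rintro _ ⟨B, rfl⟩
    exact hub B
  refine le_antisymm (ciSup_le hub) ?_
  have h0 : (0:ℝ) ≤ ⨆ B : {B : Matrix m k ℂ // ‖B‖ ≤ 1}, ‖N * (B : Matrix m k ℂ)‖ :=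
    le_trans (norm_nonneg _) (le_ciSup hbdd ⟨0, by simp⟩)
  refine myOpNorm_le_bound N h0 ?_
  intro y
  rcases eq_or_ne y 0 with rfl | hy
  · simp
  · have hyn : ‖y‖ ≠ 0 := norm_ne_zero_iff.mpr hy
    set j0 : k := Classical.arbitrary k
    set B : Matrix m k ℂ := Matrix.of fun p q => if q = j0 then (‖y‖ : ℂ)⁻¹ * y p else 0
      with hBdef
    have hBmul : ∀ z : EuclideanSpace ℂ k,
        B *ᵥ (z : k → ℂ) = ((z j0 * (‖y‖ : ℂ)⁻¹) • (y : m → ℂ)) := by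
      intro z
      funext p
      simp only [Matrix.mulVec, dotProduct, hBdef, Matrix.of_apply, Pi.smul_apply,
        smul_eq_mul]
      rw [Finset.sum_eq_single j0]
      · simp; ring
      · intro b _ hb; simp [hb]
      · simp
    have hBnorm : ‖B‖ ≤ 1 := by
      refine myOpNorm_le_bound B zero_le_one ?_
      intro z
      rw [hBmul z]
      have h1 : ((EuclideanSpace.equiv m ℂ).symm ((z j0 * (‖y‖ : ℂ)⁻¹) • (y : m → ℂ)))
          = (z j0 * (‖y‖ : ℂ)⁻¹) • y := by
        ext p
        simp [EuclideanSpace.equiv]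
      rw [h1, norm_smul, norm_mul]
      have : ‖((‖y‖ : ℂ))⁻¹‖ = ‖y‖⁻¹ := by
        rw [norm_inv, Complex.norm_real, Real.norm_of_nonneg (norm_nonneg y)]
      rw [this]
      calc ‖z j0‖ * ‖y‖⁻¹ * ‖y‖ = ‖z j0‖ := by field_simp
        _ ≤ ‖z‖ := coord_le_norm z j0
        _ = 1 * ‖z‖ := (one_mul _).symm
    have he : ‖(EuclideanSpace.single j0 (1:ℂ) : EuclideanSpace ℂ k)‖ = 1 := by
      simp [EuclideanSpace.norm_single]
    have h2 : (N * B) *ᵥ ((EuclideanSpace.single j0 (1:ℂ) : EuclideanSpace ℂ k) : k → ℂ)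
        = (‖y‖ : ℂ)⁻¹ • (N *ᵥ (y : m → ℂ)) := by
      rw [← Matrix.mulVec_mulVec, hBmul]
      have : ((EuclideanSpace.single j0 (1:ℂ) : EuclideanSpace ℂ k) j0 * (‖y‖ : ℂ)⁻¹)
          = (‖y‖ : ℂ)⁻¹ := by simp
      rw [this, Matrix.mulVec_smul]
    have h3 : ‖(EuclideanSpace.equiv m ℂ).symm ((N * B) *ᵥ
          ((EuclideanSpace.single j0 (1:ℂ) : EuclideanSpace ℂ k) : k → ℂ))‖
        = ‖y‖⁻¹ * ‖(EuclideanSpace.equiv m ℂ).symm (N *ᵥ (y : m → ℂ))‖ := by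
      rw [h2]
      have h4 : ((EuclideanSpace.equiv m ℂ).symm ((‖y‖ : ℂ)⁻¹ • (N *ᵥ (y : m → ℂ))))
          = (‖y‖ : ℂ)⁻¹ • (EuclideanSpace.equiv m ℂ).symm (N *ᵥ (y : m → ℂ)) := by
        ext p; simp [EuclideanSpace.equiv]
      rw [h4, norm_smul, norm_inv, Complex.norm_real, Real.norm_of_nonneg (norm_nonneg y)]
    have h5 := Matrix.l2_opNorm_mulVec (N * B) (EuclideanSpace.single j0 (1:ℂ))
    rw [h3, he, mul_one] at h5
    have h6 : ‖N * B‖ ≤ ⨆ B : {B : Matrix m k ℂ // ‖B‖ ≤ 1}, ‖N * (B : Matrix m k ℂ)‖ :=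
      le_ciSup hbdd ⟨B, hBnorm⟩
    calc ‖(EuclideanSpace.equiv m ℂ).symm (N *ᵥ (y : m → ℂ))‖
        = (‖y‖⁻¹ * ‖(EuclideanSpace.equiv m ℂ).symm (N *ᵥ (y : m → ℂ))‖) * ‖y‖ := by
          field_simp
      _ ≤ ‖N * B‖ * ‖y‖ := mul_le_mul_of_nonneg_right h5 (norm_nonneg y)
      _ ≤ _ := mul_le_mul_of_nonneg_right h6 (norm_nonneg y)

variable {n d : ℕ}

/-- Flatten a block matrix. -/
def fl (M : Matrix (Fin n) (Fin n) (Matrix (Fin d) (Fin d) ℂ)) :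
    Matrix (Fin n × Fin d) (Fin n × Fin d) ℂ :=
  Matrix.of fun p q => M p.1 q.1 p.2 q.2

/-- Stack a block column vector. -/
def colv (c : Fin n → Matrix (Fin d) (Fin d) ℂ) : Matrix (Fin n × Fin d) (Fin d) ℂ :=
  Matrix.of fun p q => c p.1 p.2 q

lemma fl_mul (M N : Matrix (Fin n) (Fin n) (Matrix (Fin d) (Fin d) ℂ)) :
    fl (M * N) = fl M * fl N := by
  ext p q
  simp [fl, Matrix.mul_apply, Matrix.sum_apply, Fintype.sum_prod_type]

lemma fl_one : fl (1 : Matrix (Fin n) (Fin n) (Matrix (Fin d) (Fin d) ℂ)) = 1 := by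
  ext p q
  simp only [fl, Matrix.of_apply, Matrix.one_apply]
  rcases eq_or_ne p.1 q.1 with h1 | h1
  · rcases eq_or_ne p.2 q.2 with h2 | h2
    · simp [h1, h2, Prod.ext_iff, Matrix.one_apply]
    · have : p ≠ q := fun h => h2 (by rw [h])
      simp [h1, h2, this, Matrix.one_apply]
  · have : p ≠ q := fun h => h1 (by rw [h])
    simp [h1, this]

lemma fl_conjTranspose (M : Matrix (Fin n) (Fin n) (Matrix (Fin d) (Fin d) ℂ)) :
    fl Mᴴ = (fl M)ᴴ := by
  ext p q
  simp [fl, Matrix.conjTranspose_apply]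

lemma colv_surjective : Function.Surjective (colv (n := n) (d := d)) := by
  intro C
  exact ⟨fun i => Matrix.of fun s t => C (i, s) t, rfl⟩

/-- quadratic form identity -/
lemma quad_eq (G : Matrix (Fin n) (Fin n) (Matrix (Fin d) (Fin d) ℂ))
    (b c : Fin n → Matrix (Fin d) (Fin d) ℂ) :
    (∑ i, ∑ l, (b i)ᴴ * G i l * (c l)) = (colv b)ᴴ * fl G * colv c := by
  ext p q
  simp only [Finset.sum_apply, Matrix.sum_apply, Matrix.mul_apply, Matrix.conjTranspose_apply,
    fl, colv, Matrix.of_apply, Fintype.sum_prod_type, Finset.mul_sum, Finset.sum_mul]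
  rw [Finset.sum_comm]
  refine Finset.sum_congr rfl fun l _ => ?_
  rw [Finset.sum_comm]

/-- entry of a triple product of block matrices -/
lemma triple_apply (X G Y : Matrix (Fin n) (Fin n) (Matrix (Fin d) (Fin d) ℂ)) (a b : Fin n) :
    (Xᴴ * G * Y) a b = ∑ i, ∑ l, (X i a)ᴴ * G i l * (Y l b) := by
  simp only [Matrix.mul_apply, Matrix.conjTranspose_apply, Finset.sum_mul, Finset.mul_sum]
  rw [Finset.sum_comm]
  rfl

/-- Expansion of the C*-module inner product of linear combinations. -/
lemma expand {E : Type*} [AddCommGroup E] [Module ℂ E]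
    [Module (Matrix (Fin d) (Fin d) ℂ)ᵐᵒᵖ E]
    (mI : E → E → Matrix (Fin d) (Fin d) ℂ)
    (h_add : ∀ x y z, mI x (y + z) = mI x y + mI x z)
    (h_opsmul : ∀ (a : Matrix (Fin d) (Fin d) ℂ) (x y : E),
      mI x (MulOpposite.op a • y) = mI x y * a)
    (h_star : ∀ x y, star (mI x y) = mI y x)
    (x y : Fin n → E) (a b : Fin n → Matrix (Fin d) (Fin d) ℂ) :
    mI (∑ i, MulOpposite.op (a i) • x i) (∑ l, MulOpposite.op (b l) • y l)
      = ∑ i, ∑ l, (a i)ᴴ * mI (x i) (y l) * (b l) := by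
  have hsum : ∀ (x : E) (g : Fin n → E), mI x (∑ l, g l) = ∑ l, mI x (g l) := by
    intro x g
    exact map_sum (AddMonoidHom.mk' (fun y => mI x y) (h_add x)) g Finset.univ
  have hfirst : ∀ (y : E), mI (∑ i, MulOpposite.op (a i) • x i) y
      = ∑ i, (a i)ᴴ * mI (x i) y := by
    intro y
    rw [← h_star, hsum, star_sum]
    refine Finset.sum_congr rfl fun i _ => ?_
    rw [h_opsmul, StarMul.star_mul, Matrix.star_eq_conjTranspose, h_star]
  rw [hsum]
  have hl : ∀ l, mI (∑ i, MulOpposite.op (a i) • x i) (MulOpposite.op (b l) • y l)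
      = ∑ i, (a i)ᴴ * mI (x i) (y l) * (b l) := by
    intro l
    rw [h_opsmul, hfirst, Finset.sum_mul]
  rw [Finset.sum_congr rfl fun l _ => hl l, Finset.sum_comm]

end Stmt13Aux

open Stmt13Aux

/-- Let `v i = φ₁ xᵢ` in a Hilbert C*-module `E` over `A = ℂ^{d×d}` and
`w i = φ_L (xᵢ^{L-1})` in a Hilbert C*-module `F`, and let `T` be the (bounded `A`-linear)
composed Perron–Frobenius operator, so `T (v i) = w i`.  Let `[v] R₁ = Q₁` and `[w] R_L = Q_L`
be QR decompositions (orthonormal columns in the Hilbert C*-module sense, `R_j ∈ A^{n×n}`),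
and let `G_L ∈ A^{n×n}` be the Gram matrix of the `w i`.  Then the operator norm of `T`
restricted to the submodule `Ṽ(x)` generated by `v₁,…,vₙ` equals `‖R_Lᴴ G_L R₁‖`. -/
theorem stmt13 {d n : ℕ} {E F : Type*}
    [AddCommGroup E] [Module ℂ E] [Module (Matrix (Fin d) (Fin d) ℂ)ᵐᵒᵖ E]
    [AddCommGroup F] [Module ℂ F] [Module (Matrix (Fin d) (Fin d) ℂ)ᵐᵒᵖ F]
    (mIE : E → E → Matrix (Fin d) (Fin d) ℂ) (mIF : F → F → Matrix (Fin d) (Fin d) ℂ)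
    (hE_add : ∀ x y z, mIE x (y + z) = mIE x y + mIE x z)
    (hE_smul : ∀ (z : ℂ) (x y : E), mIE x (z • y) = z • mIE x y)
    (hE_opsmul : ∀ (a : Matrix (Fin d) (Fin d) ℂ) (x y : E),
      mIE x (MulOpposite.op a • y) = mIE x y * a)
    (hE_star : ∀ x y, star (mIE x y) = mIE y x)
    (hE_pos : ∀ x, (mIE x x).PosSemidef)
    (hF_add : ∀ x y z, mIF x (y + z) = mIF x y + mIF x z)
    (hF_smul : ∀ (z : ℂ) (x y : F), mIF x (z • y) = z • mIF x y)
    (hF_opsmul : ∀ (a : Matrix (Fin d) (Fin d) ℂ) (x y : F),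
      mIF x (MulOpposite.op a • y) = mIF x y * a)
    (hF_star : ∀ x y, star (mIF x y) = mIF y x)
    (hF_pos : ∀ x, (mIF x x).PosSemidef)
    (T : E →ₗ[ℂ] F)
    (hTlin : ∀ (a : Matrix (Fin d) (Fin d) ℂ) (u : E),
      T (MulOpposite.op a • u) = MulOpposite.op a • T u)
    (v : Fin n → E) (w : Fin n → F) (hT : ∀ i, T (v i) = w i)
    (R1 RL : Matrix (Fin n) (Fin n) (Matrix (Fin d) (Fin d) ℂ))
    (Q1 : Fin n → E) (QL : Fin n → F)
    (hQR1 : ∀ j, Q1 j = ∑ i, MulOpposite.op (R1 i j) • v i)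
    (hON1 : ∀ i j, mIE (Q1 i) (Q1 j) = if i = j then 1 else 0)
    (hQRL : ∀ j, QL j = ∑ i, MulOpposite.op (RL i j) • w i)
    (hONL : ∀ i j, mIF (QL i) (QL j) = if i = j then 1 else 0) :
    (⨆ c : {c : Fin n → Matrix (Fin d) (Fin d) ℂ //
        Real.sqrt ‖mIE (∑ i, MulOpposite.op (c i) • v i)
          (∑ i, MulOpposite.op (c i) • v i)‖ ≤ 1},
      Real.sqrt ‖mIF (T (∑ i, MulOpposite.op (c.1 i) • v i))
        (T (∑ i, MulOpposite.op (c.1 i) • v i))‖) =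
    blockOpNorm (RLᴴ * (Matrix.of fun i l => mIF (w i) (w l)) * R1) := by
  classical
  rcases Nat.eq_zero_or_pos d with hd | hd
  · -- degenerate case d = 0
    subst hd
    have hz : ∀ M : Matrix (Fin 0) (Fin 0) ℂ, M = 0 := by
      intro M; ext p q; exact p.elim0
    have hz2 : ∀ M : Matrix (Fin n × Fin 0) (Fin n × Fin 0) ℂ, M = 0 := by
      intro M; ext p q; exact p.2.elim0
    have hval : ∀ c : {c : Fin n → Matrix (Fin 0) (Fin 0) ℂ //
        Real.sqrt ‖mIE (∑ i, MulOpposite.op (c i) • v i)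
          (∑ i, MulOpposite.op (c i) • v i)‖ ≤ 1},
        Real.sqrt ‖mIF (T (∑ i, MulOpposite.op (c.1 i) • v i))
          (T (∑ i, MulOpposite.op (c.1 i) • v i))‖ = 0 := by
      intro c
      rw [hz (mIF _ _), norm_zero, Real.sqrt_zero]
    haveI : Nonempty {c : Fin n → Matrix (Fin 0) (Fin 0) ℂ //
        Real.sqrt ‖mIE (∑ i, MulOpposite.op (c i) • v i)
          (∑ i, MulOpposite.op (c i) • v i)‖ ≤ 1} :=
      ⟨⟨0, by rw [hz (mIE _ _), norm_zero, Real.sqrt_zero]; norm_num⟩⟩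
    rw [iSup_congr hval, ciSup_const]
    unfold blockOpNorm
    have h9 := hz2 (Matrix.of fun (p q : Fin n × Fin 0) =>
      (RLᴴ * (Matrix.of fun i l => mIF (w i) (w l)) * R1) p.1 q.1 p.2 q.2)
    rw [h9, norm_zero]
  · haveI : Nonempty (Fin d) := ⟨⟨0, hd⟩⟩
    set G1m : Matrix (Fin n) (Fin n) (Matrix (Fin d) (Fin d) ℂ) :=
      Matrix.of fun i l => mIE (v i) (v l) with hG1m
    set GLm : Matrix (Fin n) (Fin n) (Matrix (Fin d) (Fin d) ℂ) :=
      Matrix.of fun i l => mIF (w i) (w l) with hGLm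
    -- block orthonormality
    have hblock1 : R1ᴴ * G1m * R1 = 1 := by
      ext a b
      rw [triple_apply]
      have e1 : (∑ i, ∑ l, (R1 i a)ᴴ * G1m i l * (R1 l b)) = mIE (Q1 a) (Q1 b) := by
        rw [hQR1, hQR1]
        exact (expand mIE hE_add hE_opsmul hE_star v v _ _).symm
      rw [e1, hON1, Matrix.one_apply]
    have hblockL : RLᴴ * GLm * RL = 1 := by
      ext a b
      rw [triple_apply]
      have e1 : (∑ i, ∑ l, (RL i a)ᴴ * GLm i l * (RL l b)) = mIF (QL a) (QL b) := by
        rw [hQRL, hQRL]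
        exact (expand mIF hF_add hF_opsmul hF_star w w _ _).symm
      rw [e1, hONL, Matrix.one_apply]
    -- flattened versions
    have hf1 : (fl R1)ᴴ * fl G1m * fl R1 = 1 := by
      rw [← fl_conjTranspose, ← fl_mul, ← fl_mul, hblock1, fl_one]
    have hfL : (fl RL)ᴴ * fl GLm * fl RL = 1 := by
      rw [← fl_conjTranspose, ← fl_mul, ← fl_mul, hblockL, fl_one]
    set S1 : Matrix (Fin n × Fin d) (Fin n × Fin d) ℂ := (fl R1)ᴴ * fl G1m with hS1
    set SL : Matrix (Fin n × Fin d) (Fin n × Fin d) ℂ := (fl RL)ᴴ * fl GLm with hSL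
    have hS1l : S1 * fl R1 = 1 := hf1
    have hSLl : SL * fl RL = 1 := hfL
    have hS1r : fl R1 * S1 = 1 := mul_eq_one_comm.mp hS1l
    have hSLr : fl RL * SL = 1 := mul_eq_one_comm.mp hSLl
    have hG1eq : fl G1m = S1ᴴ * S1 := by
      calc fl G1m = (fl R1 * S1)ᴴ * fl G1m * (fl R1 * S1) := by
            rw [hS1r]; simp
        _ = S1ᴴ * ((fl R1)ᴴ * fl G1m * fl R1) * S1 := by
            simp only [Matrix.conjTranspose_mul, Matrix.conjTranspose_conjTranspose, Matrix.mul_assoc]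
        _ = S1ᴴ * S1 := by rw [hf1, Matrix.mul_one]
    have hGLeq : fl GLm = SLᴴ * SL := by
      calc fl GLm = (fl RL * SL)ᴴ * fl GLm * (fl RL * SL) := by
            rw [hSLr]; simp
        _ = SLᴴ * ((fl RL)ᴴ * fl GLm * fl RL) * SL := by
            simp only [Matrix.conjTranspose_mul, Matrix.conjTranspose_conjTranspose, Matrix.mul_assoc]
        _ = SLᴴ * SL := by rw [hfL, Matrix.mul_one]
    set N : Matrix (Fin n × Fin d) (Fin n × Fin d) ℂ := SL * fl R1 with hN
    -- value identities
    have hTu : ∀ c : Fin n → Matrix (Fin d) (Fin d) ℂ,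
        T (∑ i, MulOpposite.op (c i) • v i) = ∑ i, MulOpposite.op (c i) • w i := by
      intro c
      rw [map_sum]
      exact Finset.sum_congr rfl fun i _ => by rw [hTlin, hT]
    have hnormE : ∀ c : Fin n → Matrix (Fin d) (Fin d) ℂ,
        Real.sqrt ‖mIE (∑ i, MulOpposite.op (c i) • v i)
          (∑ i, MulOpposite.op (c i) • v i)‖ = ‖S1 * colv c‖ := by
      intro c
      have e1 : mIE (∑ i, MulOpposite.op (c i) • v i) (∑ i, MulOpposite.op (c i) • v i)
          = ∑ i, ∑ l, (c i)ᴴ * G1m i l * (c l) :=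
        expand mIE hE_add hE_opsmul hE_star v v c c
      rw [e1, quad_eq, hG1eq]
      have e2 : (colv c)ᴴ * (S1ᴴ * S1) * colv c = (S1 * colv c)ᴴ * (S1 * colv c) := by
        simp only [Matrix.conjTranspose_mul, Matrix.conjTranspose_conjTranspose, Matrix.mul_assoc]
      rw [e2, sqrt_norm_cmul]
    have hnormF : ∀ c : Fin n → Matrix (Fin d) (Fin d) ℂ,
        Real.sqrt ‖mIF (T (∑ i, MulOpposite.op (c i) • v i))
          (T (∑ i, MulOpposite.op (c i) • v i))‖ = ‖N * (S1 * colv c)‖ := by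
      intro c
      have e1 : mIF (T (∑ i, MulOpposite.op (c i) • v i))
            (T (∑ i, MulOpposite.op (c i) • v i))
          = ∑ i, ∑ l, (c i)ᴴ * GLm i l * (c l) := by
        rw [hTu c]
        exact expand mIF hF_add hF_opsmul hF_star w w c c
      have e3 : N * (S1 * colv c) = SL * colv c := by
        rw [hN, Matrix.mul_assoc SL (fl R1) (S1 * colv c), ← Matrix.mul_assoc (fl R1) S1 _,
          hS1r, Matrix.one_mul]
      rw [e1, quad_eq, hGLeq, e3]
      have e2 : (colv c)ᴴ * (SLᴴ * SL) * colv c = (SL * colv c)ᴴ * (SL * colv c) := by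
        simp only [Matrix.conjTranspose_mul, Matrix.conjTranspose_conjTranspose, Matrix.mul_assoc]
      rw [e2, sqrt_norm_cmul]
    -- the surjection onto the unit ball
    set Sub := {c : Fin n → Matrix (Fin d) (Fin d) ℂ //
        Real.sqrt ‖mIE (∑ i, MulOpposite.op (c i) • v i)
          (∑ i, MulOpposite.op (c i) • v i)‖ ≤ 1} with hSub
    set e : Sub → {B : Matrix (Fin n × Fin d) (Fin d) ℂ // ‖B‖ ≤ 1} :=
      fun c => ⟨S1 * colv c.1, by rw [← hnormE c.1]; exact c.2⟩ with he
    have hesurj : Function.Surjective e := by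
      rintro ⟨B, hB⟩
      obtain ⟨c, hc⟩ := colv_surjective (fl R1 * B)
      have hSc : S1 * colv c = B := by
        rw [hc, ← Matrix.mul_assoc, hS1l, Matrix.one_mul]
      refine ⟨⟨c, ?_⟩, ?_⟩
      · rw [hnormE c, hSc]; exact hB
      · exact Subtype.ext hSc
    calc (⨆ c : Sub,
          Real.sqrt ‖mIF (T (∑ i, MulOpposite.op (c.1 i) • v i))
            (T (∑ i, MulOpposite.op (c.1 i) • v i))‖)
        = ⨆ c : Sub, ‖N * ((e c : Matrix (Fin n × Fin d) (Fin d) ℂ))‖ :=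
          iSup_congr fun c => hnormF c.1
      _ = ⨆ B : {B : Matrix (Fin n × Fin d) (Fin d) ℂ // ‖B‖ ≤ 1},
            ‖N * (B : Matrix (Fin n × Fin d) (Fin d) ℂ)‖ :=
          hesurj.iSup_comp (g := fun B => ‖N * (B : Matrix (Fin n × Fin d) (Fin d) ℂ)‖)
      _ = ‖N‖ := iSup_norm_mul N
      _ = blockOpNorm (RLᴴ * GLm * R1) := by
          unfold blockOpNorm
          have : (Matrix.of fun (p q : Fin n × Fin d) => (RLᴴ * GLm * R1) p.1 q.1 p.2 q.2)
              = fl (RLᴴ * GLm * R1) := rfl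
          rw [this, fl_mul, fl_mul, fl_conjTranspose, hN, hSL]
end

section
/- With the notation of the previous statement, if the Gram matrix G_L is invertible, then ‖P_{f_{L-1}} ⋯ P_{f_1}|_{Ṽ(x)}‖_op ≤ ‖G_L^{-1}‖_op^{1/2} · ‖G_L‖_op · ‖G_1^{-1}‖_op^{1/2}. -/
open Matrix ComplexOrder
open scoped Matrix.Norms.L2Operator

section aux
variable {m q : Type*} [Fintype m] [Fintype q] [DecidableEq m] [DecidableEq q]

private lemma myOpNorm_le_bound (A : Matrix m q ℂ) (c : ℝ) (hc : 0 ≤ c)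
    (h : ∀ x : EuclideanSpace ℂ q, ‖(EuclideanSpace.equiv m ℂ).symm (A *ᵥ x)‖ ≤ c * ‖x‖) :
    ‖A‖ ≤ c := by
  rw [Matrix.l2_opNorm_def]
  exact ContinuousLinearMap.opNorm_le_bound _ hc h

private lemma myKey (E S Si : Matrix m m ℂ) (C : Matrix m q ℂ)
    (hiS : Si * S = 1) :
    ‖Cᴴ * (Eᴴ * E) * C‖ ≤ (‖Eᴴ * E‖ * ‖Si * Siᴴ‖) * ‖Cᴴ * (Sᴴ * S) * C‖ := by
  have h1 : Cᴴ * (Eᴴ * E) * C = (E * C)ᴴ * (E * C) := by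
    rw [conjTranspose_mul]; simp only [Matrix.mul_assoc]
  have h2 : Cᴴ * (Sᴴ * S) * C = (S * C)ᴴ * (S * C) := by
    rw [conjTranspose_mul]; simp only [Matrix.mul_assoc]
  have hE : ‖Eᴴ * E‖ = ‖E‖ * ‖E‖ := Matrix.l2_opNorm_conjTranspose_mul_self E
  have hSi : ‖Si * Siᴴ‖ = ‖Si‖ * ‖Si‖ := by
    calc ‖Si * Siᴴ‖ = ‖(Siᴴ)ᴴ * Siᴴ‖ := by rw [conjTranspose_conjTranspose]
    _ = ‖Siᴴ‖ * ‖Siᴴ‖ := Matrix.l2_opNorm_conjTranspose_mul_self _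
    _ = ‖Si‖ * ‖Si‖ := by rw [Matrix.l2_opNorm_conjTranspose]
  have hq1 : ‖Cᴴ * (Eᴴ * E) * C‖ = ‖E * C‖ * ‖E * C‖ := by
    rw [h1]; exact Matrix.l2_opNorm_conjTranspose_mul_self _
  have hq2 : ‖Cᴴ * (Sᴴ * S) * C‖ = ‖S * C‖ * ‖S * C‖ := by
    rw [h2]; exact Matrix.l2_opNorm_conjTranspose_mul_self _
  have hmain : ‖E * C‖ ≤ ‖E‖ * (‖Si‖ * ‖S * C‖) := by
    apply myOpNorm_le_bound _ _ (by positivity)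
    intro x
    have e1 : (E * C) *ᵥ x = E *ᵥ (C *ᵥ x) := (Matrix.mulVec_mulVec x E C).symm
    have e2 : (C *ᵥ x) = Si *ᵥ ((S * C) *ᵥ x) := by
      rw [Matrix.mulVec_mulVec, ← Matrix.mul_assoc, hiS, Matrix.one_mul]
    have b1 : ‖(EuclideanSpace.equiv m ℂ).symm (E *ᵥ (C *ᵥ x))‖
        ≤ ‖E‖ * ‖(EuclideanSpace.equiv m ℂ).symm (C *ᵥ x)‖ :=
      Matrix.l2_opNorm_mulVec E ((EuclideanSpace.equiv m ℂ).symm (C *ᵥ x))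
    have b2 : ‖(EuclideanSpace.equiv m ℂ).symm (Si *ᵥ ((S * C) *ᵥ x))‖
        ≤ ‖Si‖ * ‖(EuclideanSpace.equiv m ℂ).symm ((S * C) *ᵥ x)‖ :=
      Matrix.l2_opNorm_mulVec Si ((EuclideanSpace.equiv m ℂ).symm ((S * C) *ᵥ x))
    have b3 : ‖(EuclideanSpace.equiv m ℂ).symm ((S * C) *ᵥ x)‖ ≤ ‖S * C‖ * ‖x‖ :=
      Matrix.l2_opNorm_mulVec (S * C) x
    have g0 : ‖(EuclideanSpace.equiv m ℂ).symm ((E * C) *ᵥ x)‖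
        = ‖(EuclideanSpace.equiv m ℂ).symm (E *ᵥ (C *ᵥ x))‖ := by rw [e1]
    have g2 : ‖(EuclideanSpace.equiv m ℂ).symm (C *ᵥ x)‖
        = ‖(EuclideanSpace.equiv m ℂ).symm (Si *ᵥ ((S * C) *ᵥ x))‖ := by rw [e2]
    calc ‖(EuclideanSpace.equiv m ℂ).symm ((E * C) *ᵥ x)‖
        = ‖(EuclideanSpace.equiv m ℂ).symm (E *ᵥ (C *ᵥ x))‖ := g0
      _ ≤ ‖E‖ * ‖(EuclideanSpace.equiv m ℂ).symm (C *ᵥ x)‖ := b1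
      _ = ‖E‖ * ‖(EuclideanSpace.equiv m ℂ).symm (Si *ᵥ ((S * C) *ᵥ x))‖ := by rw [g2]
      _ ≤ ‖E‖ * (‖Si‖ * ‖(EuclideanSpace.equiv m ℂ).symm ((S * C) *ᵥ x)‖) :=
          mul_le_mul_of_nonneg_left b2 (norm_nonneg _)
      _ ≤ ‖E‖ * (‖Si‖ * (‖S * C‖ * ‖x‖)) :=
          mul_le_mul_of_nonneg_left (mul_le_mul_of_nonneg_left b3 (norm_nonneg _)) (norm_nonneg _)
      _ = ‖E‖ * (‖Si‖ * ‖S * C‖) * ‖x‖ := by ring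
  rw [hq1, hq2, hE, hSi]
  have final : ∀ (a e s c : ℝ), 0 ≤ a → 0 ≤ e → 0 ≤ s → 0 ≤ c → a ≤ e * (s * c) →
      a * a ≤ e * e * (s * s) * (c * c) := by intros a e s c _ _ _ _ h; nlinarith
  exact final _ _ _ _ (norm_nonneg _) (norm_nonneg _) (norm_nonneg _) (norm_nonneg _) hmain

end aux

private lemma gram_expand {d n : ℕ} {E : Type*} [AddCommGroup E] [Module ℂ E]
    [Module (Matrix (Fin d) (Fin d) ℂ)ᵐᵒᵖ E]
    (mI : E → E → Matrix (Fin d) (Fin d) ℂ)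
    (h_add : ∀ x y z, mI x (y + z) = mI x y + mI x z)
    (h_opsmul : ∀ (a : Matrix (Fin d) (Fin d) ℂ) x y,
      mI x (MulOpposite.op a • y) = mI x y * a)
    (h_star : ∀ x y, star (mI x y) = mI y x)
    (b c : Fin n → Matrix (Fin d) (Fin d) ℂ) (x : Fin n → E) :
    mI (∑ i, MulOpposite.op (b i) • x i) (∑ i, MulOpposite.op (c i) • x i)
      = ∑ i, ∑ l, star (b i) * mI (x i) (x l) * c l := by
  have step1 : ∀ (u : E) (e : Fin n → Matrix (Fin d) (Fin d) ℂ),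
      mI u (∑ l, MulOpposite.op (e l) • x l) = ∑ l, mI u (x l) * e l := by
    intro u e
    have h0 := map_sum (AddMonoidHom.mk' (mI u) (h_add u))
      (fun l => MulOpposite.op (e l) • x l) Finset.univ
    simp only [AddMonoidHom.mk'_apply] at h0
    rw [h0]
    exact Finset.sum_congr rfl fun l _ => h_opsmul _ _ _
  have step2 : ∀ l, mI (∑ i, MulOpposite.op (b i) • x i) (x l)
      = ∑ i, star (b i) * mI (x i) (x l) := by
    intro l
    rw [← h_star, step1 _ b, star_sum]
    refine Finset.sum_congr rfl fun i _ => ?_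
    rw [StarMul.star_mul, h_star]
  rw [step1 _ c]
  rw [Finset.sum_comm]
  refine Finset.sum_congr rfl fun l _ => ?_
  rw [step2 l, Finset.sum_mul]

private lemma flatten_quad {n d : ℕ} (G : Matrix (Fin n) (Fin n) (Matrix (Fin d) (Fin d) ℂ))
    (b c : Fin n → Matrix (Fin d) (Fin d) ℂ) :
    ∑ i, ∑ l, star (b i) * G i l * c l =
      (Matrix.of fun (p : Fin n × Fin d) (m : Fin d) => b p.1 p.2 m)ᴴ *
      (Matrix.of fun (p q : Fin n × Fin d) => G p.1 q.1 p.2 q.2) *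
      (Matrix.of fun (p : Fin n × Fin d) (m : Fin d) => c p.1 p.2 m) := by
  ext a e
  simp only [Matrix.sum_apply, Matrix.mul_apply, Matrix.conjTranspose_apply, Matrix.of_apply,
    Matrix.star_apply, Fintype.sum_prod_type, Finset.sum_mul, Finset.mul_sum]
  rw [Finset.sum_comm]
  refine Finset.sum_congr rfl fun i _ => ?_
  rw [Finset.sum_comm]

private lemma ortho_flatten {n d : ℕ} (G R : Matrix (Fin n) (Fin n) (Matrix (Fin d) (Fin d) ℂ))
    (h : ∀ j j', ∑ i, ∑ l, star (R i j) * G i l * R l j'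
      = if j = j' then (1 : Matrix (Fin d) (Fin d) ℂ) else 0) :
    (Matrix.of fun (p q : Fin n × Fin d) => R p.1 q.1 p.2 q.2)ᴴ *
    (Matrix.of fun (p q : Fin n × Fin d) => G p.1 q.1 p.2 q.2) *
    (Matrix.of fun (p q : Fin n × Fin d) => R p.1 q.1 p.2 q.2) = 1 := by
  ext ⟨j, a⟩ ⟨j', e⟩
  have hq := flatten_quad G (fun i => R i j) (fun l => R l j')
  rw [h j j'] at hq
  have key : ((Matrix.of fun (p q : Fin n × Fin d) => R p.1 q.1 p.2 q.2)ᴴ *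
      (Matrix.of fun (p q : Fin n × Fin d) => G p.1 q.1 p.2 q.2) *
      (Matrix.of fun (p q : Fin n × Fin d) => R p.1 q.1 p.2 q.2)) (j, a) (j', e)
      = ((Matrix.of fun (p : Fin n × Fin d) (m : Fin d) => R p.1 j p.2 m)ᴴ *
      (Matrix.of fun (p q : Fin n × Fin d) => G p.1 q.1 p.2 q.2) *
      (Matrix.of fun (p : Fin n × Fin d) (m : Fin d) => R p.1 j' p.2 m)) a e := by
    simp [Matrix.mul_apply, Matrix.conjTranspose_apply]
  rw [key, ← hq]
  by_cases hjj : j = j'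
  · subst hjj
    simp [Matrix.one_apply, Prod.ext_iff]
  · simp [Matrix.one_apply, Prod.ext_iff, hjj]

set_option maxHeartbeats 1000000 in
/-- With the notation of Statement 13 (QR decompositions `[v] R₁ = Q₁`,
`[w] R_L = Q_L`, Gram matrices `G₁` of `v` and `G_L` of `w`, composed Perron–Frobenius
operator `T` with `T (v i) = w i`), if the Gram matrix `G_L` is invertible (and `G₁` is
invertible, so that the QR decompositions exist), then the operator norm of `T` restricted to
the submodule generated by `v₁,…,vₙ` satisfies
`‖T|_Ṽ(x)‖ ≤ ‖G_L⁻¹‖^{1/2} ‖G_L‖ ‖G₁⁻¹‖^{1/2}`. -/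
theorem stmt14 {d n : ℕ} {E F : Type*}
    [AddCommGroup E] [Module ℂ E] [Module (Matrix (Fin d) (Fin d) ℂ)ᵐᵒᵖ E]
    [AddCommGroup F] [Module ℂ F] [Module (Matrix (Fin d) (Fin d) ℂ)ᵐᵒᵖ F]
    (mIE : E → E → Matrix (Fin d) (Fin d) ℂ) (mIF : F → F → Matrix (Fin d) (Fin d) ℂ)
    (hE_add : ∀ x y z, mIE x (y + z) = mIE x y + mIE x z)
    (hE_smul : ∀ (z : ℂ) (x y : E), mIE x (z • y) = z • mIE x y)
    (hE_opsmul : ∀ (a : Matrix (Fin d) (Fin d) ℂ) (x y : E),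
      mIE x (MulOpposite.op a • y) = mIE x y * a)
    (hE_star : ∀ x y, star (mIE x y) = mIE y x)
    (hE_pos : ∀ x, (mIE x x).PosSemidef)
    (hF_add : ∀ x y z, mIF x (y + z) = mIF x y + mIF x z)
    (hF_smul : ∀ (z : ℂ) (x y : F), mIF x (z • y) = z • mIF x y)
    (hF_opsmul : ∀ (a : Matrix (Fin d) (Fin d) ℂ) (x y : F),
      mIF x (MulOpposite.op a • y) = mIF x y * a)
    (hF_star : ∀ x y, star (mIF x y) = mIF y x)
    (hF_pos : ∀ x, (mIF x x).PosSemidef)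
    (T : E →ₗ[ℂ] F)
    (hTlin : ∀ (a : Matrix (Fin d) (Fin d) ℂ) (u : E),
      T (MulOpposite.op a • u) = MulOpposite.op a • T u)
    (v : Fin n → E) (w : Fin n → F) (hT : ∀ i, T (v i) = w i)
    (R1 RL : Matrix (Fin n) (Fin n) (Matrix (Fin d) (Fin d) ℂ))
    (Q1 : Fin n → E) (QL : Fin n → F)
    (hQR1 : ∀ j, Q1 j = ∑ i, MulOpposite.op (R1 i j) • v i)
    (hON1 : ∀ i j, mIE (Q1 i) (Q1 j) = if i = j then 1 else 0)
    (hQRL : ∀ j, QL j = ∑ i, MulOpposite.op (RL i j) • w i)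
    (hONL : ∀ i j, mIF (QL i) (QL j) = if i = j then 1 else 0)
    (hGL : IsUnit (Matrix.of fun i l => mIF (w i) (w l) :
      Matrix (Fin n) (Fin n) (Matrix (Fin d) (Fin d) ℂ)))
    (hG1 : IsUnit (Matrix.of fun i l => mIE (v i) (v l) :
      Matrix (Fin n) (Fin n) (Matrix (Fin d) (Fin d) ℂ))) :
    (⨆ c : {c : Fin n → Matrix (Fin d) (Fin d) ℂ //
        Real.sqrt ‖mIE (∑ i, MulOpposite.op (c i) • v i)
          (∑ i, MulOpposite.op (c i) • v i)‖ ≤ 1},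
      Real.sqrt ‖mIF (T (∑ i, MulOpposite.op (c.1 i) • v i))
        (T (∑ i, MulOpposite.op (c.1 i) • v i))‖) ≤
    Real.sqrt (blockOpNorm (Ring.inverse (Matrix.of fun i l => mIF (w i) (w l)))) *
      blockOpNorm (Matrix.of fun i l => mIF (w i) (w l)) *
      Real.sqrt (blockOpNorm (Ring.inverse (Matrix.of fun i l => mIE (v i) (v l)))) := by
  have hzeroE : ∀ x : E, mIE x 0 = 0 := by
    intro x
    have h := hE_smul 0 x 0
    simpa using h
  have hzeroF : ∀ x : F, mIF x 0 = 0 := by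
    intro x
    have h := hF_smul 0 x 0
    simpa using h
  -- the index type of the supremum is nonempty
  have hne : Nonempty {c : Fin n → Matrix (Fin d) (Fin d) ℂ //
      Real.sqrt ‖mIE (∑ i, MulOpposite.op (c i) • v i)
        (∑ i, MulOpposite.op (c i) • v i)‖ ≤ 1} := by
    refine ⟨⟨0, ?_⟩⟩
    have hzs : (∑ i, MulOpposite.op ((0 : Fin n → Matrix (Fin d) (Fin d) ℂ) i) • v i) = 0 := by
      simp
    rw [hzs, hzeroE]
    simp
  -- RHS is nonnegative
  have hRHS : 0 ≤ Real.sqrt (blockOpNorm (Ring.inverse (Matrix.of fun i l => mIF (w i) (w l)))) *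
      blockOpNorm (Matrix.of fun i l => mIF (w i) (w l)) *
      Real.sqrt (blockOpNorm (Ring.inverse (Matrix.of fun i l => mIE (v i) (v l)))) := by
    have h1 : 0 ≤ blockOpNorm (Matrix.of fun i l => mIF (w i) (w l)) := norm_nonneg _
    positivity
  refine ciSup_le fun cc => ?_
  obtain ⟨c, hc⟩ := cc
  by_cases hnd : n = 0 ∨ d = 0
  · rcases hnd with hn | hd
    · subst hn
      have hf : (∑ i, MulOpposite.op (c i) • v i) = 0 := by
        simp only [Finset.univ_eq_empty, Finset.sum_empty]
      rw [hf, map_zero, hzeroF]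
      simpa using hRHS
    · subst hd
      have hz : mIF (T (∑ i, MulOpposite.op (c i) • v i))
          (T (∑ i, MulOpposite.op (c i) • v i)) = 0 := by
        ext i j; exact i.elim0
      rw [hz]
      simpa using hRHS
  push_neg at hnd
  obtain ⟨hn, hd⟩ := hnd
  haveI : Nonempty (Fin n × Fin d) :=
    ⟨(⟨0, Nat.pos_of_ne_zero hn⟩, ⟨0, Nat.pos_of_ne_zero hd⟩)⟩
  -- flattened matrices
  let φ := Matrix.compRingEquiv (Fin n) (Fin d) ℂ
  let Gm1 : Matrix (Fin n) (Fin n) (Matrix (Fin d) (Fin d) ℂ) :=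
    Matrix.of fun i l => mIE (v i) (v l)
  let GmL : Matrix (Fin n) (Fin n) (Matrix (Fin d) (Fin d) ℂ) :=
    Matrix.of fun i l => mIF (w i) (w l)
  let Ghat1 : Matrix (Fin n × Fin d) (Fin n × Fin d) ℂ :=
    Matrix.of fun p q => Gm1 p.1 q.1 p.2 q.2
  let GhatL : Matrix (Fin n × Fin d) (Fin n × Fin d) ℂ :=
    Matrix.of fun p q => GmL p.1 q.1 p.2 q.2
  let Rhat1 : Matrix (Fin n × Fin d) (Fin n × Fin d) ℂ :=
    Matrix.of fun p q => R1 p.1 q.1 p.2 q.2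
  let RhatL : Matrix (Fin n × Fin d) (Fin n × Fin d) ℂ :=
    Matrix.of fun p q => RL p.1 q.1 p.2 q.2
  -- orthonormality in flattened form
  have horthoE : ∀ j j', ∑ i, ∑ l, star (R1 i j) * Gm1 i l * R1 l j'
      = if j = j' then (1 : Matrix (Fin d) (Fin d) ℂ) else 0 := by
    intro j j'
    have h2 : mIE (Q1 j) (Q1 j') = ∑ i, ∑ l, star (R1 i j) * Gm1 i l * R1 l j' := by
      rw [hQR1 j, hQR1 j']
      exact gram_expand mIE hE_add hE_opsmul hE_star (fun i => R1 i j) (fun l => R1 l j') v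
    rw [← h2, hON1]
  have horthoF : ∀ j j', ∑ i, ∑ l, star (RL i j) * GmL i l * RL l j'
      = if j = j' then (1 : Matrix (Fin d) (Fin d) ℂ) else 0 := by
    intro j j'
    have h2 : mIF (QL j) (QL j') = ∑ i, ∑ l, star (RL i j) * GmL i l * RL l j' := by
      rw [hQRL j, hQRL j']
      exact gram_expand mIF hF_add hF_opsmul hF_star (fun i => RL i j) (fun l => RL l j') w
    rw [← h2, hONL]
  have hflat1 : Rhat1ᴴ * Ghat1 * Rhat1 = 1 := ortho_flatten Gm1 R1 horthoE
  have hflatL : RhatLᴴ * GhatL * RhatL = 1 := ortho_flatten GmL RL horthoF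
  -- invertibility of the flattened Gram matrices hence of Rhat
  have hdet1 : IsUnit Rhat1.det := by
    have hdd := congrArg Matrix.det hflat1
    rw [Matrix.det_mul, Matrix.det_mul, Matrix.det_one] at hdd
    exact IsUnit.of_mul_eq_one (Rhat1ᴴ.det * Ghat1.det)
      (by rw [← hdd]; ring)
  have hdetL : IsUnit RhatL.det := by
    have hdd := congrArg Matrix.det hflatL
    rw [Matrix.det_mul, Matrix.det_mul, Matrix.det_one] at hdd
    exact IsUnit.of_mul_eq_one (RhatLᴴ.det * GhatL.det)
      (by rw [← hdd]; ring)
  have h1inv : Rhat1 * Rhat1⁻¹ = 1 := Matrix.mul_nonsing_inv _ hdet1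
  have h1inv' : Rhat1⁻¹ * Rhat1 = 1 := Matrix.nonsing_inv_mul _ hdet1
  have hLinv : RhatL * RhatL⁻¹ = 1 := Matrix.mul_nonsing_inv _ hdetL
  have hLinv' : RhatL⁻¹ * RhatL = 1 := Matrix.nonsing_inv_mul _ hdetL
  have hct1 : Rhat1⁻¹ᴴ * Rhat1ᴴ = 1 := by
    rw [← conjTranspose_mul, h1inv, conjTranspose_one]
  have hctL : RhatL⁻¹ᴴ * RhatLᴴ = 1 := by
    rw [← conjTranspose_mul, hLinv, conjTranspose_one]
  -- decompositions of the Gram matrices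
  have hre1 : Ghat1 = Rhat1⁻¹ᴴ * Rhat1⁻¹ := by
    calc Ghat1 = 1 * Ghat1 * 1 := by rw [Matrix.one_mul, Matrix.mul_one]
      _ = (Rhat1⁻¹ᴴ * Rhat1ᴴ) * Ghat1 * (Rhat1 * Rhat1⁻¹) := by rw [hct1, h1inv]
      _ = Rhat1⁻¹ᴴ * ((Rhat1ᴴ * Ghat1 * Rhat1) * Rhat1⁻¹) := by
          simp only [Matrix.mul_assoc]
      _ = Rhat1⁻¹ᴴ * Rhat1⁻¹ := by rw [hflat1, Matrix.one_mul]
  have hreL : GhatL = RhatL⁻¹ᴴ * RhatL⁻¹ := by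
    calc GhatL = 1 * GhatL * 1 := by rw [Matrix.one_mul, Matrix.mul_one]
      _ = (RhatL⁻¹ᴴ * RhatLᴴ) * GhatL * (RhatL * RhatL⁻¹) := by rw [hctL, hLinv]
      _ = RhatL⁻¹ᴴ * ((RhatLᴴ * GhatL * RhatL) * RhatL⁻¹) := by
          simp only [Matrix.mul_assoc]
      _ = RhatL⁻¹ᴴ * RhatL⁻¹ := by rw [hflatL, Matrix.one_mul]
  -- the inverse of the flattened Gram matrix
  have hGRR1 : Ghat1 * (Rhat1 * Rhat1ᴴ) = 1 := by
    rw [hre1]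
    calc (Rhat1⁻¹ᴴ * Rhat1⁻¹) * (Rhat1 * Rhat1ᴴ)
        = Rhat1⁻¹ᴴ * ((Rhat1⁻¹ * Rhat1) * Rhat1ᴴ) := by simp only [Matrix.mul_assoc]
      _ = 1 := by rw [h1inv', Matrix.one_mul, hct1]
  have hGRRL : GhatL * (RhatL * RhatLᴴ) = 1 := by
    rw [hreL]
    calc (RhatL⁻¹ᴴ * RhatL⁻¹) * (RhatL * RhatLᴴ)
        = RhatL⁻¹ᴴ * ((RhatL⁻¹ * RhatL) * RhatLᴴ) := by simp only [Matrix.mul_assoc]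
      _ = 1 := by rw [hLinv', Matrix.one_mul, hctL]
  have hphi1 : φ Gm1 = Ghat1 := rfl
  have hphiL : φ GmL = GhatL := rfl
  have hBinv1 : φ (Ring.inverse Gm1) = Rhat1 * Rhat1ᴴ := by
    have hmul : φ (Ring.inverse Gm1) * Ghat1 = 1 := by
      rw [← hphi1, ← _root_.map_mul, _root_.Ring.inverse_mul_cancel _ hG1, _root_.map_one]
    calc φ (Ring.inverse Gm1) = φ (Ring.inverse Gm1) * (Ghat1 * (Rhat1 * Rhat1ᴴ)) := by
          rw [hGRR1, Matrix.mul_one]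
      _ = (φ (Ring.inverse Gm1) * Ghat1) * (Rhat1 * Rhat1ᴴ) := by
          simp only [Matrix.mul_assoc]
      _ = Rhat1 * Rhat1ᴴ := by rw [hmul, Matrix.one_mul]
  have hBinvL : φ (Ring.inverse GmL) = RhatL * RhatLᴴ := by
    have hmul : φ (Ring.inverse GmL) * GhatL = 1 := by
      rw [← hphiL, ← _root_.map_mul, _root_.Ring.inverse_mul_cancel _ hGL, _root_.map_one]
    calc φ (Ring.inverse GmL) = φ (Ring.inverse GmL) * (GhatL * (RhatL * RhatLᴴ)) := by
          rw [hGRRL, Matrix.mul_one]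
      _ = (φ (Ring.inverse GmL) * GhatL) * (RhatL * RhatLᴴ) := by
          simp only [Matrix.mul_assoc]
      _ = RhatL * RhatLᴴ := by rw [hmul, Matrix.one_mul]
  -- identify the blockOpNorm values
  have hnb1 : blockOpNorm (Ring.inverse Gm1) = ‖Rhat1 * Rhat1ᴴ‖ := by
    show ‖φ (Ring.inverse Gm1)‖ = _
    rw [hBinv1]
  have hnbL : blockOpNorm (Ring.inverse GmL) = ‖RhatL * RhatLᴴ‖ := by
    show ‖φ (Ring.inverse GmL)‖ = _
    rw [hBinvL]
  have hnG : blockOpNorm GmL = ‖GhatL‖ := rfl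
  -- the quadratic forms
  set f := ∑ i, MulOpposite.op (c i) • v i with hf
  let C : Matrix (Fin n × Fin d) (Fin d) ℂ :=
    Matrix.of fun p m => c p.1 p.2 m
  have hA : mIE f f = Cᴴ * Ghat1 * C :=
    (gram_expand mIE hE_add hE_opsmul hE_star c c v).trans (flatten_quad Gm1 c c)
  have hTf : T f = ∑ i, MulOpposite.op (c i) • w i := by
    rw [hf, map_sum]
    exact Finset.sum_congr rfl fun i _ => by rw [hTlin, hT]
  have hB : mIF (T f) (T f) = Cᴴ * GhatL * C := by
    rw [hTf]
    exact (gram_expand mIF hF_add hF_opsmul hF_star c c w).trans (flatten_quad GmL c c)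
  -- the constraint
  have hcle : ‖Cᴴ * Ghat1 * C‖ ≤ 1 := by
    rw [← hA]
    have h0 : (0:ℝ) ≤ ‖mIE f f‖ := norm_nonneg _
    nlinarith [Real.sq_sqrt h0, Real.sqrt_nonneg ‖mIE f f‖, hc]
  -- the key estimate
  have hkey : ‖Cᴴ * GhatL * C‖ ≤ (‖GhatL‖ * ‖Rhat1 * Rhat1ᴴ‖) * ‖Cᴴ * Ghat1 * C‖ := by
    have := myKey (RhatL⁻¹) (Rhat1⁻¹) Rhat1 C h1inv
    rwa [← hreL, ← hre1] at this
  have hx : ‖Cᴴ * GhatL * C‖ ≤ ‖GhatL‖ * ‖Rhat1 * Rhat1ᴴ‖ := by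
    have h0 : (0:ℝ) ≤ ‖GhatL‖ * ‖Rhat1 * Rhat1ᴴ‖ := mul_nonneg (norm_nonneg _) (norm_nonneg _)
    calc ‖Cᴴ * GhatL * C‖ ≤ (‖GhatL‖ * ‖Rhat1 * Rhat1ᴴ‖) * ‖Cᴴ * Ghat1 * C‖ := hkey
      _ ≤ (‖GhatL‖ * ‖Rhat1 * Rhat1ᴴ‖) * 1 := mul_le_mul_of_nonneg_left hcle h0
      _ = ‖GhatL‖ * ‖Rhat1 * Rhat1ᴴ‖ := mul_one _
  -- 1 ≤ ‖GhatL⁻¹‖ * ‖GhatL‖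
  have hBLG : (RhatL * RhatLᴴ) * GhatL = 1 := mul_eq_one_comm.mp hGRRL
  have hone : (1:ℝ) ≤ ‖RhatL * RhatLᴴ‖ * ‖GhatL‖ := by
    have hno : ‖(RhatL * RhatLᴴ) * GhatL‖ = 1 := by rw [hBLG]; exact norm_one
    calc (1:ℝ) = ‖(RhatL * RhatLᴴ) * GhatL‖ := hno.symm
      _ ≤ ‖RhatL * RhatLᴴ‖ * ‖GhatL‖ := Matrix.l2_opNorm_mul _ _
  -- final arithmetic
  rw [hB, hnb1, hnbL, hnG]
  set x := ‖Cᴴ * GhatL * C‖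
  set a := ‖RhatL * RhatLᴴ‖
  set g := ‖GhatL‖
  set b := ‖Rhat1 * Rhat1ᴴ‖
  have ha0 : (0:ℝ) ≤ a := norm_nonneg _
  have hg0 : (0:ℝ) ≤ g := norm_nonneg _
  have hb0 : (0:ℝ) ≤ b := norm_nonneg _
  have s3 : Real.sqrt g ≤ Real.sqrt a * g := by
    have s2 : (1:ℝ) ≤ Real.sqrt (a * g) := by
      have := Real.sqrt_le_sqrt hone
      rwa [Real.sqrt_one] at this
    calc Real.sqrt g = 1 * Real.sqrt g := (one_mul _).symm
      _ ≤ Real.sqrt (a * g) * Real.sqrt g :=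
          mul_le_mul_of_nonneg_right s2 (Real.sqrt_nonneg _)
      _ = (Real.sqrt a * Real.sqrt g) * Real.sqrt g := by rw [Real.sqrt_mul ha0]
      _ = Real.sqrt a * (Real.sqrt g * Real.sqrt g) := by ring
      _ = Real.sqrt a * g := by rw [Real.mul_self_sqrt hg0]
  calc Real.sqrt x ≤ Real.sqrt (g * b) := Real.sqrt_le_sqrt hx
    _ = Real.sqrt g * Real.sqrt b := Real.sqrt_mul hg0 b
    _ ≤ (Real.sqrt a * g) * Real.sqrt b :=
        mul_le_mul_of_nonneg_right s3 (Real.sqrt_nonneg _)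
end
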